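/- For every y ∈ ℤ and every {0,…,T}-valued stopping time τ of the natural filtration of Y: U_{μ^{Root}_T}(y) ≥ E_y[U_{μ^{Root}}(Y_τ) 1_{τ < T} + U_λ(Y_τ) 1_{τ = T}]. -/

import Mathlib

open MeasureTheory ProbabilityTheory

noncomputable section

set_option linter.unusedSectionVars false

namespace SwitchingIdentities

variable {Ω : Type*} [MeasurableSpace Ω]

/-- The increment `ξ` has the fair `±1` law. -/
def FairSign (P : Measure Ω) (ξ : Ω → ℤ) : Prop :=
  P {ω | ξ ω = 1} = 1 / 2 ∧ P {ω | ξ ω = -1} = 1 / 2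

/-- `ξ` and `η` are the increment families of two independent simple symmetric random
walks on `ℤ`: all increments are measurable, fair `±1` coins, and the whole family
`(ξ₀, ξ₁, …, η₀, η₁, …)` is independent. -/
def IndepSSRWIncrements (P : Measure Ω) (ξ η : ℕ → Ω → ℤ) : Prop :=
  (∀ n, Measurable (ξ n)) ∧ (∀ n, Measurable (η n)) ∧
  (∀ n, FairSign P (ξ n)) ∧ (∀ n, FairSign P (η n)) ∧
  iIndepFun (Sum.elim ξ η) P

/-- The random walk with increments `ξ` started at `x`. -/
def walk (ξ : ℕ → Ω → ℤ) (x : ℤ) (t : ℕ) (ω : Ω) : ℤ :=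
  x + ∑ i ∈ Finset.range t, ξ i ω

/-- A Root continuation set: if `(t,m) ∈ D` then `(s,m) ∈ D` for all `s < t`. -/
def IsRootCont {α : Type*} (D : Set (ℕ × α)) : Prop :=
  ∀ t m, (t, m) ∈ D → ∀ s, s < t → (s, m) ∈ D

/-- A Rost continuation set: if `(t,m) ∈ D` then `(s,m) ∈ D` for all `s > t`. -/
def IsRostCont {α : Type*} (D : Set (ℕ × α)) : Prop :=
  ∀ t m, (t, m) ∈ D → ∀ s, t < s → (s, m) ∈ D

/-- `hit D Z ω = inf {t : (t, Z_t) ∉ D}` (junk value `0` if the walk never leaves `D`). -/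
def hit {α : Type*} (D : Set (ℕ × α)) (Z : ℕ → Ω → α) (ω : Ω) : ℕ :=
  sInf {t | (t, Z t ω) ∉ D}

/-- `hitBy D Z n ω = inf {t : (t, Z_t) ∉ D} ∧ n` (equal to `n` if the walk never leaves `D`). -/
def hitBy {α : Type*} (D : Set (ℕ × α)) (Z : ℕ → Ω → α) (n : ℕ) (ω : Ω) : ℕ :=
  sInf ({t | (t, Z t ω) ∉ D} ∪ {n})

/-- `revHitBy D Z T ω = inf {t : (T − t, Z_t) ∉ D} ∧ T`, the exit time of the time-reversed
space-time walk, capped at `T`. -/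
def revHitBy {α : Type*} (D : Set (ℕ × α)) (Z : ℕ → Ω → α) (T : ℕ) (ω : Ω) : ℕ :=
  sInf ({t | (T - t, Z t ω) ∉ D} ∪ {T})

/-- The potential function `U_m(z) = −∑_x |z − x| m({x})` of a measure `m` on `ℤ`. -/
def potential (m : Measure ℤ) (z : ℤ) : ℝ :=
  -∑' w : ℤ, (|z - w| : ℤ) * (m {w}).toReal

/-- A measure on `ℤ` has a finite first moment. -/
def FiniteFirstMoment (m : Measure ℤ) : Prop :=
  Integrable (fun z : ℤ => (z : ℝ)) m

/-- `τ` is a stopping time of the natural filtration of the process `Z`: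
`{τ ≤ n} ∈ σ(Z_0, …, Z_n)` for every `n`. -/
def IsNatStopping {α : Type*} [MeasurableSpace α] (Z : ℕ → Ω → α) (τ : Ω → ℕ) : Prop :=
  ∀ n : ℕ,
    MeasurableSet[MeasurableSpace.comap (fun ω => (fun i : Fin (n + 1) => Z i ω)) inferInstance]
      {ω | τ ω ≤ n}

/-- The law `μ^{Root}` of `X_{ρ^{Root}}` where `X` has increments `ξ` and `X_0 ∼ λ`. -/
def muRoot (P : Measure Ω) (ξ : ℕ → Ω → ℤ) (D : Set (ℕ × ℤ)) (lam : Measure ℤ) : Measure ℤ :=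
  Measure.map (fun p : ℤ × Ω => walk ξ p.1 (hit D (walk ξ p.1) p.2) p.2) (lam.prod P)

/-- The law `μ^{Root}_T` of `X_{ρ^{Root} ∧ T}` where `X` has increments `ξ` and `X_0 ∼ λ`. -/
def muRootT (P : Measure Ω) (ξ : ℕ → Ω → ℤ) (D : Set (ℕ × ℤ)) (lam : Measure ℤ) (T : ℕ) :
    Measure ℤ :=
  Measure.map (fun p : ℤ × Ω => walk ξ p.1 (hitBy D (walk ξ p.1) T p.2) p.2) (lam.prod P)

/-! ### ℕ-sInf helpers -/

lemma sInf_union_le (E : Set ℕ) (n : ℕ) : sInf (E ∪ {n}) ≤ n :=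
  Nat.sInf_le (Set.mem_union_right _ rfl)

lemma sInf_union_eq_iff (E : Set ℕ) (t k : ℕ) :
    sInf (E ∪ {t}) = k ↔ k ≤ t ∧ (∀ r < k, r ∉ E) ∧ (k = t ∨ k ∈ E) := by
  constructor
  · rintro rfl
    refine ⟨sInf_union_le E t, fun r hr hrE => ?_, ?_⟩
    · exact Nat.notMem_of_lt_sInf hr (Set.mem_union_left _ hrE)
    · rcases Nat.sInf_mem (s := E ∪ {t}) ⟨t, Set.mem_union_right _ rfl⟩ with h | h
      · exact Or.inr h
      · exact Or.inl h
  · rintro ⟨hkt, hbelow, hk⟩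
    have hmem : k ∈ E ∪ {t} := by
      rcases hk with rfl | hk
      · exact Set.mem_union_right _ rfl
      · exact Set.mem_union_left _ hk
    refine le_antisymm (Nat.sInf_le hmem) ?_
    by_contra hlt
    push_neg at hlt
    have hm := Nat.sInf_mem (s := E ∪ {t}) ⟨k, hmem⟩
    rcases hm with hm | hm
    · exact hbelow _ hlt hm
    · simp only [Set.mem_singleton_iff] at hm
      omega
lemma sInf_eq_iff' (E : Set ℕ) (k : ℕ) :
    sInf E = k ↔ (∀ r < k, r ∉ E) ∧ (k ∈ E ∨ (k = 0 ∧ ∀ r, r ∉ E)) := by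
  constructor
  · rintro rfl
    by_cases hE : E.Nonempty
    · exact ⟨fun r hr => Nat.notMem_of_lt_sInf hr, Or.inl (Nat.sInf_mem hE)⟩
    · have : E = ∅ := Set.not_nonempty_iff_eq_empty.mp hE
      subst this
      simp [Nat.sInf_empty]
  · rintro ⟨hbelow, hk | ⟨rfl, hE⟩⟩
    · refine le_antisymm (Nat.sInf_le hk) ?_
      by_contra hlt
      push_neg at hlt
      exact hbelow _ hlt (Nat.sInf_mem ⟨k, hk⟩)
    · have : E = ∅ := Set.eq_empty_iff_forall_notMem.mpr hE
      simp [this, Nat.sInf_empty]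

lemma sInf_union_of_exists {E : Set ℕ} {n : ℕ} (h : ∃ s ∈ E, s ≤ n) :
    sInf (E ∪ {n}) = sInf E := by
  obtain ⟨s, hsE, hsn⟩ := h
  have hne : E.Nonempty := ⟨s, hsE⟩
  have h1 : sInf E ≤ n := le_trans (Nat.sInf_le hsE) hsn
  rw [sInf_union_eq_iff]
  exact ⟨h1, fun r hr => Nat.notMem_of_lt_sInf hr, Or.inr (Nat.sInf_mem hne)⟩

lemma sInf_union_congr {E E' : Set ℕ} {t : ℕ} (h : ∀ r ≤ t, (r ∈ E ↔ r ∈ E')) :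
    sInf (E ∪ {t}) = sInf (E' ∪ {t}) := by
  obtain ⟨ha, hb, hc⟩ := (sInf_union_eq_iff E' t (sInf (E' ∪ {t}))).mp rfl
  rw [sInf_union_eq_iff]
  refine ⟨ha, fun r hr hrE => hb r hr ((h r (by omega)).mp hrE), ?_⟩
  rcases hc with h' | h'
  · exact Or.inl h'
  · exact Or.inr ((h _ ha).mpr h')

/-! ### abs identity -/

lemma abs_avg (a : ℤ) : |a + 1| + |a - 1| = 2 * max |a| 1 := by
  rcases abs_cases (a + 1) with ⟨h1, h2⟩ | ⟨h1, h2⟩ <;>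
    rcases abs_cases (a - 1) with ⟨h3, h4⟩ | ⟨h3, h4⟩ <;>
    rcases abs_cases a with ⟨h5, h6⟩ | ⟨h5, h6⟩ <;>
    rcases max_cases |a| 1 with ⟨h7, h8⟩ | ⟨h7, h8⟩ <;> omega



/-! ### walk and hitBy basics -/

lemma mset (S : Set ℤ) : MeasurableSet S := (Set.to_countable S).measurableSet

lemma walk_zero (ξ : ℕ → Ω → ℤ) (x : ℤ) (ω : Ω) : walk ξ x 0 ω = x := by simp [walk]

lemma walk_succ (ξ : ℕ → Ω → ℤ) (x : ℤ) (t : ℕ) (ω : Ω) :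
    walk ξ x (t + 1) ω = walk ξ x t ω + ξ t ω := by
  simp [walk, Finset.sum_range_succ, add_assoc]

lemma walk_bound {ξ : ℕ → Ω → ℤ} {x : ℤ} {t : ℕ} {ω : Ω}
    (h : ∀ i, ξ i ω = 1 ∨ ξ i ω = -1) : |walk ξ x t ω| ≤ |x| + t := by
  induction t with
  | zero => simp [walk]
  | succ n ih =>
    rw [walk_succ]
    have h1 : |ξ n ω| ≤ 1 := by rcases h n with h' | h' <;> simp [h']
    have h2 := abs_add_le (walk ξ x n ω) (ξ n ω)
    push_cast
    push_cast at ih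
    linarith

lemma measurable_walk {ξ : ℕ → Ω → ℤ} (hξ : ∀ n, Measurable (ξ n)) (t : ℕ) :
    Measurable fun p : ℤ × Ω => walk ξ p.1 t p.2 := by
  apply Measurable.add measurable_fst
  exact Finset.measurable_sum _ fun i _ => (hξ i).comp measurable_snd

lemma measurableSet_walk_eq {ξ : ℕ → Ω → ℤ} (hξ : ∀ n, Measurable (ξ n)) (r : ℕ) (w : ℤ) :
    MeasurableSet {p : ℤ × Ω | walk ξ p.1 r p.2 = w} :=
  (measurable_walk hξ r) (mset {w})

lemma measurableSet_walkD {ξ : ℕ → Ω → ℤ} (hξ : ∀ n, Measurable (ξ n)) (r : ℕ)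
    (D : Set (ℕ × ℤ)) : MeasurableSet {p : ℤ × Ω | (r, walk ξ p.1 r p.2) ∈ D} :=
  (measurable_walk hξ r) (mset {m | (r, m) ∈ D})

lemma measurable_walk_comp {ξ : ℕ → Ω → ℤ} (hξ : ∀ n, Measurable (ξ n))
    {h : ℤ × Ω → ℕ} (hh : Measurable h) :
    Measurable fun p : ℤ × Ω => walk ξ p.1 (h p) p.2 := by
  apply measurable_to_countable'
  intro w
  have heq : (fun p : ℤ × Ω => walk ξ p.1 (h p) p.2) ⁻¹' {w}
      = ⋃ k : ℕ, (h ⁻¹' {k}) ∩ {p : ℤ × Ω | walk ξ p.1 k p.2 = w} := by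
    ext p
    simp only [Set.mem_preimage, Set.mem_singleton_iff, Set.mem_iUnion, Set.mem_inter_iff,
      Set.mem_setOf_eq]
    constructor
    · intro hw; exact ⟨h p, rfl, hw⟩
    · rintro ⟨k, hk, hw⟩; rw [hk]; exact hw
  rw [heq]
  exact MeasurableSet.iUnion fun k =>
    (hh (measurableSet_singleton k)).inter (measurableSet_walk_eq hξ k w)

lemma hitBy_eq_iff {α : Type*} (D : Set (ℕ × α)) (Z : ℕ → Ω → α) (t : ℕ) (ω : Ω) (k : ℕ) :
    hitBy D Z t ω = k ↔ k ≤ t ∧ (∀ r < k, (r, Z r ω) ∈ D) ∧ (k = t ∨ (k, Z k ω) ∉ D) := by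
  rw [hitBy, sInf_union_eq_iff]
  simp only [Set.mem_setOf_eq, not_not]

lemma hitBy_le {α : Type*} (D : Set (ℕ × α)) (Z : ℕ → Ω → α) (t : ℕ) (ω : Ω) :
    hitBy D Z t ω ≤ t := sInf_union_le _ _

lemma hitBy_zero {α : Type*} (D : Set (ℕ × α)) (Z : ℕ → Ω → α) (ω : Ω) :
    hitBy D Z 0 ω = 0 := Nat.le_zero.mp (hitBy_le D Z 0 ω)

lemma hitBy_succ_of_stay {α : Type*} {D : Set (ℕ × α)} {Z : ℕ → Ω → α} {t : ℕ} {ω : Ω}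
    (h : ∀ s ≤ t, (s, Z s ω) ∈ D) :
    hitBy D Z (t + 1) ω = t + 1 ∧ hitBy D Z t ω = t := by
  constructor
  · rw [hitBy_eq_iff]
    exact ⟨le_refl _, fun r hr => h r (by omega), Or.inl rfl⟩
  · rw [hitBy_eq_iff]
    exact ⟨le_refl _, fun r hr => h r (by omega), Or.inl rfl⟩

lemma hitBy_succ_of_exit {α : Type*} {D : Set (ℕ × α)} {Z : ℕ → Ω → α} {t : ℕ} {ω : Ω}
    (h : ∃ s ≤ t, (s, Z s ω) ∉ D) :
    hitBy D Z (t + 1) ω = hitBy D Z t ω := by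
  obtain ⟨s, hst, hs⟩ := h
  rw [hitBy, hitBy, sInf_union_of_exists ⟨s, hs, by omega⟩, sInf_union_of_exists ⟨s, hs, hst⟩]

lemma hitBy_eq_hit {α : Type*} {D : Set (ℕ × α)} {Z : ℕ → Ω → α} {ω : Ω}
    (hne : ∃ s, (s, Z s ω) ∉ D) {n : ℕ} (hn : hit D Z ω ≤ n) :
    hitBy D Z n ω = hit D Z ω := by
  obtain ⟨s, hs⟩ := hne
  have : hit D Z ω ∈ {u : ℕ | (u, Z u ω) ∉ D} := Nat.sInf_mem ⟨s, hs⟩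
  exact sInf_union_of_exists ⟨hit D Z ω, this, hn⟩

lemma measurable_hitBy {ξ : ℕ → Ω → ℤ} (hξ : ∀ n, Measurable (ξ n)) (D : Set (ℕ × ℤ)) (t : ℕ) :
    Measurable fun p : ℤ × Ω => hitBy D (walk ξ p.1) t p.2 := by
  apply measurable_to_countable'
  intro k
  by_cases hkt : k ≤ t
  · by_cases hke : k = t
    · have heq : (fun p : ℤ × Ω => hitBy D (walk ξ p.1) t p.2) ⁻¹' {k}
          = ⋂ (r : ℕ) (_ : r < k), {p : ℤ × Ω | (r, walk ξ p.1 r p.2) ∈ D} := by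
        ext p
        simp only [Set.mem_preimage, Set.mem_singleton_iff, Set.mem_iInter, Set.mem_setOf_eq]
        rw [hitBy_eq_iff]
        constructor
        · rintro ⟨-, h2, -⟩; exact h2
        · intro h2; exact ⟨hkt, h2, Or.inl hke⟩
      rw [heq]
      exact MeasurableSet.iInter fun r => MeasurableSet.iInter fun _ =>
        measurableSet_walkD hξ r D
    · have heq : (fun p : ℤ × Ω => hitBy D (walk ξ p.1) t p.2) ⁻¹' {k}
          = (⋂ (r : ℕ) (_ : r < k), {p : ℤ × Ω | (r, walk ξ p.1 r p.2) ∈ D})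
            ∩ {p : ℤ × Ω | (k, walk ξ p.1 k p.2) ∈ D}ᶜ := by
        ext p
        simp only [Set.mem_preimage, Set.mem_singleton_iff, Set.mem_inter_iff, Set.mem_iInter,
          Set.mem_setOf_eq, Set.mem_compl_iff]
        rw [hitBy_eq_iff]
        constructor
        · rintro ⟨-, h2, h3 | h3⟩
          · exact absurd h3 hke
          · exact ⟨h2, h3⟩
        · rintro ⟨h2, h3⟩; exact ⟨hkt, h2, Or.inr h3⟩
      rw [heq]
      exact (MeasurableSet.iInter fun r => MeasurableSet.iInter fun _ =>
        measurableSet_walkD hξ r D).inter (measurableSet_walkD hξ k D).compl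
  · have heq : (fun p : ℤ × Ω => hitBy D (walk ξ p.1) t p.2) ⁻¹' {k} = ∅ := by
      ext p
      simp only [Set.mem_preimage, Set.mem_singleton_iff, Set.mem_empty_iff_false, iff_false]
      intro h
      exact hkt (h ▸ hitBy_le D (walk ξ p.1) t p.2)
    rw [heq]
    exact MeasurableSet.empty

lemma hit_eq_iff {α : Type*} (D : Set (ℕ × α)) (Z : ℕ → Ω → α) (ω : Ω) (k : ℕ) :
    hit D Z ω = k ↔ (∀ r < k, (r, Z r ω) ∈ D)
      ∧ ((k, Z k ω) ∉ D ∨ (k = 0 ∧ ∀ r, (r, Z r ω) ∈ D)) := by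
  rw [hit, sInf_eq_iff']
  simp only [Set.mem_setOf_eq, not_not]

lemma measurable_hit {ξ : ℕ → Ω → ℤ} (hξ : ∀ n, Measurable (ξ n)) (D : Set (ℕ × ℤ)) :
    Measurable fun p : ℤ × Ω => hit D (walk ξ p.1) p.2 := by
  apply measurable_to_countable'
  intro k
  rcases Nat.eq_zero_or_pos k with rfl | hk
  · have heq : (fun p : ℤ × Ω => hit D (walk ξ p.1) p.2) ⁻¹' {0}
        = {p : ℤ × Ω | (0, walk ξ p.1 0 p.2) ∈ D}ᶜ
          ∪ ⋂ (r : ℕ), {p : ℤ × Ω | (r, walk ξ p.1 r p.2) ∈ D} := by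
      ext p
      simp only [Set.mem_preimage, Set.mem_singleton_iff, Set.mem_union, Set.mem_compl_iff,
        Set.mem_iInter, Set.mem_setOf_eq]
      rw [hit_eq_iff]
      constructor
      · rintro ⟨-, h2 | ⟨-, h3⟩⟩
        · exact Or.inl h2
        · exact Or.inr h3
      · rintro (h2 | h3)
        · exact ⟨by omega, Or.inl h2⟩
        · exact ⟨by omega, Or.inr ⟨rfl, h3⟩⟩
    rw [heq]
    exact (measurableSet_walkD hξ 0 D).compl.union
      (MeasurableSet.iInter fun r => measurableSet_walkD hξ r D)
  · have heq : (fun p : ℤ × Ω => hit D (walk ξ p.1) p.2) ⁻¹' {k}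
        = (⋂ (r : ℕ) (_ : r < k), {p : ℤ × Ω | (r, walk ξ p.1 r p.2) ∈ D})
          ∩ {p : ℤ × Ω | (k, walk ξ p.1 k p.2) ∈ D}ᶜ := by
      ext p
      simp only [Set.mem_preimage, Set.mem_singleton_iff, Set.mem_inter_iff, Set.mem_iInter,
        Set.mem_setOf_eq, Set.mem_compl_iff]
      rw [hit_eq_iff]
      constructor
      · rintro ⟨h1, h2 | ⟨h3, -⟩⟩
        · exact ⟨h1, h2⟩
        · omega
      · rintro ⟨h1, h2⟩; exact ⟨h1, Or.inl h2⟩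
    rw [heq]
    exact (MeasurableSet.iInter fun r => MeasurableSet.iInter fun _ =>
      measurableSet_walkD hξ r D).inter (measurableSet_walkD hξ k D).compl


/-! ### integrability helper -/

lemma integrable_of_bdd {P : Measure Ω} [IsFiniteMeasure P] {g : Ω → ℝ}
    (hm : AEStronglyMeasurable g P) {C : ℝ} (h : ∀ᵐ ω ∂P, |g ω| ≤ C) : Integrable g P :=
  ⟨hm, HasFiniteIntegral.of_bounded (C := C) (by simpa [Real.norm_eq_abs] using h)⟩

/-! ### the master one-step averaging lemma -/

lemma master {P : Measure Ω} [IsProbabilityMeasure P] {F : ℕ ⊕ ℕ → Ω → ℤ}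
    (hmeas : ∀ i, Measurable (F i))
    (hind : iIndepFun F P)
    (hgood : ∀ᵐ ω ∂P, ∀ i, F i ω = 1 ∨ F i ω = -1)
    (s : Finset (ℕ ⊕ ℕ)) (j : ℕ ⊕ ℕ) (hj : j ∉ s) (hfair : FairSign P (F j))
    (ψ : (s → ℤ) → ℤ → ℝ) {C : ℝ}
    (hC : ∀ v e, (∀ i, v i = 1 ∨ v i = -1) → (e = 1 ∨ e = -1) → |ψ v e| ≤ C) :
    ∫ ω, ψ (fun i : s => F i ω) (F j ω) ∂P
      = (∫ ω, ψ (fun i : s => F i ω) 1 ∂P + ∫ ω, ψ (fun i : s => F i ω) (-1) ∂P) / 2 := by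
  classical
  set cl : ℤ → ℤ := fun a => if a = -1 then -1 else 1 with hcl
  set ψ' : (s → ℤ) → ℤ → ℝ := fun v e => ψ (fun i => cl (v i)) (cl e) with hψ'
  have hcl1 : cl 1 = 1 := by norm_num [hcl]
  have hclm : cl (-1) = -1 := by norm_num [hcl]
  have hψ'C : ∀ v e, |ψ' v e| ≤ C := by
    intro v e
    apply hC
    · intro i; by_cases h : v i = -1 <;> simp [hcl, h]
    · by_cases h : e = -1 <;> simp [hcl, h]
  have hC0 : 0 ≤ C := le_trans (abs_nonneg _) (hψ'C (fun _ => 1) 1)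
  set W : Ω → (s → ℤ) := fun ω i => F i ω with hW
  have hWmeas : Measurable W := measurable_pi_lambda _ fun i => hmeas i
  have hindep : IndepFun W (F j) P := by
    have h2 := hind.indepFun_finset s {j} (Finset.disjoint_singleton_right.mpr hj) hmeas
    have h3 := h2.comp measurable_id
      (measurable_pi_apply (⟨j, Finset.mem_singleton_self j⟩ : ({j} : Finset (ℕ ⊕ ℕ))))
    exact h3
  -- factorization against indicator functions of the increment
  have hhalf : ∀ (e0 : ℤ), P {ω | F j ω = e0} = 1/2 → ∀ (φ : (s → ℤ) → ℝ), (∀ v, |φ v| ≤ C) →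
      ∫ ω, φ (W ω) * (if F j ω = e0 then (1:ℝ) else 0) ∂P = (∫ ω, φ (W ω) ∂P) / 2 := by
    intro e0 he0 φ hφ
    have hφm : Measurable φ := measurable_of_countable φ
    have hχm : Measurable (fun e : ℤ => if e = e0 then (1:ℝ) else 0) := measurable_of_countable _
    have hIF : IndepFun (fun ω => φ (W ω)) (fun ω => if F j ω = e0 then (1:ℝ) else 0) P :=
      hindep.comp hφm hχm
    have hmul := hIF.integral_mul_eq_mul_integral ((hφm.comp hWmeas).aestronglyMeasurable)
      ((hχm.comp (hmeas j)).aestronglyMeasurable)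
    have hpi : (fun ω => φ (W ω)) * (fun ω => if F j ω = e0 then (1:ℝ) else 0)
        = fun ω => φ (W ω) * (if F j ω = e0 then (1:ℝ) else 0) := rfl
    rw [hpi] at hmul
    have hsm : MeasurableSet {ω | F j ω = e0} := (hmeas j) (mset {e0})
    have hg : ∫ ω, (if F j ω = e0 then (1:ℝ) else 0) ∂P = 1/2 := by
      have : (fun ω => if F j ω = e0 then (1:ℝ) else 0)
          = Set.indicator {ω | F j ω = e0} (fun _ => (1:ℝ)) := by
        funext ω; rw [Set.indicator_apply]; rfl
      rw [this, integral_indicator_const (1:ℝ) hsm, measureReal_def, he0]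
      simp [ENNReal.toReal_div]
    rw [hmul, hg]
    ring
  have hdecomp : ∀ᵐ ω ∂P, ψ (fun i : s => F i ω) (F j ω)
      = ψ' (W ω) 1 * (if F j ω = 1 then (1:ℝ) else 0)
        + ψ' (W ω) (-1) * (if F j ω = -1 then (1:ℝ) else 0) := by
    filter_upwards [hgood] with ω h
    have hWfix : (fun i : s => cl (W ω i)) = fun i : s => F i ω := by
      funext i
      rcases h i with h' | h' <;> simp only [hW] <;> rw [h'] <;> simp [hcl]
    have hkey : ∀ e : ℤ, cl e = e → ψ' (W ω) e = ψ (fun i : s => F i ω) e := by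
      intro e hce
      simp only [hψ']
      rw [hce, hWfix]
    rcases h j with h' | h' <;> rw [h'] <;>
      norm_num [hkey 1 hcl1, hkey (-1) hclm]
  have haegood : ∀ᵐ ω ∂P, ∀ e : ℤ, cl e = e → ψ' (W ω) e = ψ (fun i : s => F i ω) e := by
    filter_upwards [hgood] with ω h
    intro e hce
    have hWfix : (fun i : s => cl (W ω i)) = fun i : s => F i ω := by
      funext i
      rcases h i with h' | h' <;> simp only [hW] <;> rw [h'] <;> simp [hcl]
    simp only [hψ']
    rw [hce, hWfix]
  have hψ'Wm : ∀ e : ℤ, Measurable fun ω => ψ' (W ω) e :=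
    fun e => (measurable_of_countable (fun v => ψ' v e)).comp hWmeas
  have hint1 : Integrable (fun ω => ψ' (W ω) 1 * (if F j ω = 1 then (1:ℝ) else 0)) P := by
    apply integrable_of_bdd (((hψ'Wm 1).mul
      ((measurable_of_countable (fun e : ℤ => if e = 1 then (1:ℝ) else 0)).comp
        (hmeas j))).aestronglyMeasurable) (C := C)
    filter_upwards with ω
    rw [Pi.mul_apply, Function.comp_apply, abs_mul]
    by_cases h : F j ω = 1 <;> simp [h, abs_of_nonneg, hψ'C (W ω) 1]
    · exact hC0
  have hint2 : Integrable (fun ω => ψ' (W ω) (-1) * (if F j ω = -1 then (1:ℝ) else 0)) P := by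
    apply integrable_of_bdd (((hψ'Wm (-1)).mul
      ((measurable_of_countable (fun e : ℤ => if e = -1 then (1:ℝ) else 0)).comp
        (hmeas j))).aestronglyMeasurable) (C := C)
    filter_upwards with ω
    rw [Pi.mul_apply, Function.comp_apply, abs_mul]
    by_cases h : F j ω = -1 <;> simp [h, abs_of_nonneg, hψ'C (W ω) (-1)]
    · exact hC0
  rw [integral_congr_ae hdecomp, integral_add hint1 hint2,
    hhalf 1 hfair.1 _ (fun v => hψ'C v 1), hhalf (-1) hfair.2 _ (fun v => hψ'C v (-1))]
  have e1 : ∫ ω, ψ' (W ω) 1 ∂P = ∫ ω, ψ (fun i : s => F i ω) 1 ∂P := by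
    apply integral_congr_ae
    filter_upwards [haegood] with ω h
    exact h 1 hcl1
  have e2 : ∫ ω, ψ' (W ω) (-1) ∂P = ∫ ω, ψ (fun i : s => F i ω) (-1) ∂P := by
    apply integral_congr_ae
    filter_upwards [haegood] with ω h
    exact h (-1) hclm
  rw [e1, e2]
  ring



/-! ### fair signs are a.e. `±1` -/

lemma fairSign_ae {P : Measure Ω} [IsProbabilityMeasure P] {g : Ω → ℤ} (hg : Measurable g)
    (hf : FairSign P g) : ∀ᵐ ω ∂P, g ω = 1 ∨ g ω = -1 := by
  have hd : Disjoint {ω | g ω = 1} {ω | g ω = -1} := by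
    rw [Set.disjoint_left]
    intro ω h1 h2
    simp only [Set.mem_setOf_eq] at h1 h2
    omega
  have hu : P ({ω | g ω = 1} ∪ {ω | g ω = -1}) = 1 := by
    rw [measure_union hd (hg (mset {-1})), hf.1, hf.2, ENNReal.add_halves]
  rw [ae_iff]
  have hss : {ω | ¬(g ω = 1 ∨ g ω = -1)} = ({ω | g ω = 1} ∪ {ω | g ω = -1})ᶜ := by
    ext ω; simp [not_or]
  rw [hss]
  exact (prob_compl_eq_zero_iff ((hg (mset {1})).union (hg (mset {-1})))).mpr hu

lemma ae_prod_snd {lam : Measure ℤ} [IsProbabilityMeasure lam] {P : Measure Ω}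
    [IsProbabilityMeasure P] {Q : Ω → Prop} (hQ : ∀ᵐ ω ∂P, Q ω) :
    ∀ᵐ p ∂(lam.prod P), Q p.2 := by
  rw [ae_iff] at hQ ⊢
  have hsub : {p : ℤ × Ω | ¬ Q p.2} ⊆ Set.univ ×ˢ {ω | ¬ Q ω} :=
    fun p hp => ⟨Set.mem_univ p.1, hp⟩
  apply measure_mono_null hsub
  rw [Measure.prod_prod, hQ, mul_zero]

/-! ### stopped walks -/

def stopWalk (ξ : ℕ → Ω → ℤ) (D : Set (ℕ × ℤ)) (t : ℕ) (p : ℤ × Ω) : ℤ :=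
  walk ξ p.1 (hitBy D (walk ξ p.1) t p.2) p.2

def hitWalk (ξ : ℕ → Ω → ℤ) (D : Set (ℕ × ℤ)) (p : ℤ × Ω) : ℤ :=
  walk ξ p.1 (hit D (walk ξ p.1) p.2) p.2

lemma measurable_stopWalk {ξ : ℕ → Ω → ℤ} (hξ : ∀ n, Measurable (ξ n)) (D : Set (ℕ × ℤ))
    (t : ℕ) : Measurable (stopWalk ξ D t) :=
  measurable_walk_comp hξ (measurable_hitBy hξ D t)

lemma measurable_hitWalk {ξ : ℕ → Ω → ℤ} (hξ : ∀ n, Measurable (ξ n)) (D : Set (ℕ × ℤ)) :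
    Measurable (hitWalk ξ D) :=
  measurable_walk_comp hξ (measurable_hit hξ D)

lemma stopWalk_bound {ξ : ℕ → Ω → ℤ} {D : Set (ℕ × ℤ)} {t : ℕ} {p : ℤ × Ω}
    (h : ∀ i, ξ i p.2 = 1 ∨ ξ i p.2 = -1) : |stopWalk ξ D t p| ≤ |p.1| + t := by
  have h1 := walk_bound (x := p.1) (t := hitBy D (walk ξ p.1) t p.2) h
  have h2 := hitBy_le D (walk ξ p.1) t p.2
  rw [stopWalk]
  have : ((hitBy D (walk ξ p.1) t p.2 : ℕ) : ℤ) ≤ (t : ℤ) := by exact_mod_cast h2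
  omega

/-! ### integrability on the product space -/

def uu (P : Measure Ω) (ξ : ℕ → Ω → ℤ) (D : Set (ℕ × ℤ)) (lam : Measure ℤ) (t : ℕ)
    (z : ℤ) : ℝ :=
  ∫ p, -((|z - stopWalk ξ D t p| : ℤ) : ℝ) ∂(lam.prod P)

def vv (P : Measure Ω) (ξ : ℕ → Ω → ℤ) (D : Set (ℕ × ℤ)) (x : ℤ) (t : ℕ) (z : ℤ) : ℝ :=
  ∫ ω, -((|z - stopWalk ξ D t (x, ω)| : ℤ) : ℝ) ∂P

lemma integrable_prod_of_bdd {lam : Measure ℤ} [IsProbabilityMeasure lam] {P : Measure Ω}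
    [IsProbabilityMeasure P] {g : ℤ × Ω → ℝ} (hg : Measurable g)
    (hlam : FiniteFirstMoment lam) {c : ℝ} (hc : 0 ≤ c)
    (hbd : ∀ x : ℤ, ∀ᵐ ω ∂P, |g (x, ω)| ≤ |(x : ℝ)| + c) :
    Integrable g (lam.prod P) := by
  have hslice : ∀ x : ℤ, Integrable (fun ω => g (x, ω)) P := fun x =>
    integrable_of_bdd (hg.comp measurable_prodMk_left).aestronglyMeasurable (hbd x)
  rw [integrable_prod_iff hg.aestronglyMeasurable]
  refine ⟨Filter.Eventually.of_forall hslice, ?_⟩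
  apply Integrable.mono' (g := fun x : ℤ => |(x : ℝ)| + c) (hlam.abs.add (integrable_const c))
  · exact (hg.norm.stronglyMeasurable.integral_prod_right').aestronglyMeasurable
  · filter_upwards with x
    have h1 : ‖∫ ω, ‖g (x, ω)‖ ∂P‖ ≤ ∫ ω, ‖g (x, ω)‖ ∂P := by
      rw [Real.norm_eq_abs, abs_le]
      constructor
      · refine le_trans ?_ (le_refl _)
        have := integral_nonneg (f := fun ω => ‖g (x, ω)‖) (μ := P) (fun ω => norm_nonneg _)
        linarith
      · exact le_refl _
    refine h1.trans ?_
    have h2 : ∫ ω, ‖g (x, ω)‖ ∂P ≤ ∫ ω, (|(x : ℝ)| + c) ∂P := by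
      apply integral_mono_ae (hslice x).norm (integrable_const _)
      filter_upwards [hbd x] with ω hω
      simpa [Real.norm_eq_abs] using hω
    simpa using h2

/-! ### potential of a mapped measure -/

lemma potential_map_eq {lam : Measure ℤ} [IsProbabilityMeasure lam] {P : Measure Ω}
    [IsProbabilityMeasure P] {G : ℤ × Ω → ℤ} (hG : Measurable G)
    (hint : Integrable (fun p => ((|y - G p| : ℤ) : ℝ)) (lam.prod P)) :
    potential (Measure.map G (lam.prod P)) y = ∫ p, -((|y - G p| : ℤ) : ℝ) ∂(lam.prod P) := by
  have hf : Integrable (fun w : ℤ => ((|y - w| : ℤ) : ℝ)) (Measure.map G (lam.prod P)) := by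
    rw [integrable_map_measure (measurable_of_countable _).aestronglyMeasurable hG.aemeasurable]
    exact hint
  have h2 : ∫ w : ℤ, ((|y - w| : ℤ) : ℝ) ∂(Measure.map G (lam.prod P))
      = ∫ p, ((|y - G p| : ℤ) : ℝ) ∂(lam.prod P) :=
    integral_map hG.aemeasurable (measurable_of_countable _).aestronglyMeasurable
  rw [integral_countable' hf] at h2
  rw [potential, integral_neg, ← h2]
  congr 1
  apply tsum_congr
  intro w
  rw [smul_eq_mul, mul_comm]; rfl



lemma good_ae {P : Measure Ω} [IsProbabilityMeasure P] {ξ η : ℕ → Ω → ℤ}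
    (h : IndepSSRWIncrements P ξ η) :
    ∀ᵐ ω ∂P, ∀ i : ℕ ⊕ ℕ, Sum.elim ξ η i ω = 1 ∨ Sum.elim ξ η i ω = -1 := by
  rw [ae_all_iff]
  intro i
  rcases i with n | n
  · exact fairSign_ae (h.1 n) (h.2.2.1 n)
  · exact fairSign_ae (h.2.1 n) (h.2.2.2.1 n)

lemma elim_meas {ξ η : ℕ → Ω → ℤ} (h : IndepSSRWIncrements P ξ η) :
    ∀ i : ℕ ⊕ ℕ, Measurable (Sum.elim ξ η i) := by
  rintro (n | n)
  · exact h.1 n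
  · exact h.2.1 n

section OneStep

variable {P : Measure Ω} [IsProbabilityMeasure P] {ξ η : ℕ → Ω → ℤ} {D : Set (ℕ × ℤ)}

/-- integrability of the stopped-walk potential integrand, for a fixed start `x`. -/
lemma integrable_stop_slice (h : IndepSSRWIncrements P ξ η) (D : Set (ℕ × ℤ))
    (x z : ℤ) (t : ℕ) :
    Integrable (fun ω => -((|z - stopWalk ξ D t (x, ω)| : ℤ) : ℝ)) P := by
  apply integrable_of_bdd (C := ((|z| + |x| + t : ℤ) : ℝ))
  · exact ((measurable_of_countable (fun w : ℤ => -((|z - w| : ℤ) : ℝ))).comp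
      ((measurable_stopWalk h.1 D t).comp measurable_prodMk_left)).aestronglyMeasurable
  · filter_upwards [good_ae h] with ω hg
    have hgx : ∀ i, ξ i ω = 1 ∨ ξ i ω = -1 := fun i => by simpa using hg (Sum.inl i)
    have hb := stopWalk_bound (ξ := ξ) (D := D) (t := t) (p := (x, ω)) hgx
    rw [abs_neg, abs_of_nonneg (by positivity)]
    have hb2 : |stopWalk ξ D t (x, ω)| ≤ |x| + t := by simpa using hb
    have h5 : |z - stopWalk ξ D t (x, ω)| ≤ |z| + |stopWalk ξ D t (x, ω)| := abs_sub _ _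
    have : |z - stopWalk ξ D t (x, ω)| ≤ |z| + |x| + t := by omega
    exact_mod_cast this

lemma vv_step (h : IndepSSRWIncrements P ξ η) (D : Set (ℕ × ℤ)) (x z : ℤ) (t : ℕ) :
    vv P ξ D x (t + 1) z ≤ vv P ξ D x t z ∧
      (vv P ξ D x t (z + 1) + vv P ξ D x t (z - 1)) / 2 ≤ vv P ξ D x (t + 1) z := by
  classical
  set F : ℕ ⊕ ℕ → Ω → ℤ := Sum.elim ξ η with hF
  set s : Finset (ℕ ⊕ ℕ) := (Finset.range t).image Sum.inl with hs
  have hj : (Sum.inl t : ℕ ⊕ ℕ) ∉ s := by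
    simp [hs, Finset.mem_image]
  -- reconstruction of the walk from the increment tuple
  set vget : (s → ℤ) → ℕ → ℤ :=
    fun v i => if hi : Sum.inl i ∈ s then v ⟨Sum.inl i, hi⟩ else 0 with hvget
  set wk : (s → ℤ) → ℕ → ℤ := fun v r => x + ∑ i ∈ Finset.range r, vget v i with hwk
  set hb : (s → ℤ) → ℕ := fun v => sInf ({r | (r, wk v r) ∉ D} ∪ {t}) with hhb
  set ψ : (s → ℤ) → ℤ → ℝ := fun v e =>
    if ∀ r ≤ t, (r, wk v r) ∈ D then -((|z - (wk v t + e)| : ℤ) : ℝ)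
    else -((|z - wk v (hb v)| : ℤ) : ℝ) with hψ
  set tup : Ω → (s → ℤ) := fun ω i => F i ω with htup
  -- pointwise identification
  have hW1 : ∀ ω, ∀ r ≤ t, wk (tup ω) r = walk ξ x r ω := by
    intro ω r hr
    rw [hwk, walk]
    simp only [add_right_inj]
    apply Finset.sum_congr rfl
    intro i hi
    have hins : Sum.inl i ∈ s := by
      rw [hs]
      exact Finset.mem_image_of_mem _ (Finset.mem_range.mpr
        (lt_of_lt_of_le (Finset.mem_range.mp hi) hr))
    rw [hvget]
    simp only [hins, dif_pos]
    rfl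
  have hW2 : ∀ ω, (∀ r ≤ t, (r, wk (tup ω) r) ∈ D) ↔ (∀ r ≤ t, (r, walk ξ x r ω) ∈ D) := by
    intro ω
    constructor <;> intro hh r hr
    · rw [← hW1 ω r hr]; exact hh r hr
    · rw [hW1 ω r hr]; exact hh r hr
  have hW3 : ∀ ω, hb (tup ω) = hitBy D (walk ξ x) t ω := by
    intro ω
    rw [hhb, hitBy]
    apply sInf_union_congr
    intro r hr
    simp only [Set.mem_setOf_eq]
    rw [hW1 ω r hr]
  have hW4 : ∀ ω e, ψ (tup ω) e =
      if ∀ r ≤ t, (r, walk ξ x r ω) ∈ D then -((|z - (walk ξ x t ω + e)| : ℤ) : ℝ)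
      else -((|z - stopWalk ξ D t (x, ω)| : ℤ) : ℝ) := by
    intro ω e
    simp only [hψ]
    by_cases hst : ∀ r ≤ t, (r, walk ξ x r ω) ∈ D
    · rw [if_pos ((hW2 ω).mpr hst), if_pos hst, hW1 ω t (le_refl t)]
    · rw [if_neg (fun hh => hst ((hW2 ω).mp hh)), if_neg hst]
      have h5 : hb (tup ω) ≤ t := by rw [hW3]; exact hitBy_le _ _ _ _
      rw [hW3 ω, hW1 ω _ (hitBy_le D (walk ξ x) t ω)]
      rfl
  have hW5 : ∀ ω, ψ (tup ω) (ξ t ω) = -((|z - stopWalk ξ D (t + 1) (x, ω)| : ℤ) : ℝ) := by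
    intro ω
    rw [hW4]
    by_cases hst : ∀ r ≤ t, (r, walk ξ x r ω) ∈ D
    · rw [if_pos hst]
      have := (hitBy_succ_of_stay (Z := walk ξ x) (D := D) hst).1
      show _ = -((|z - walk ξ x (hitBy D (walk ξ x) (t+1) (x, ω).2) (x, ω).2| : ℤ) : ℝ)
      rw [this, walk_succ]
    · rw [if_neg hst]
      push_neg at hst
      obtain ⟨r, hr1, hr2⟩ := hst
      show _ = -((|z - walk ξ x (hitBy D (walk ξ x) (t+1) (x, ω).2) (x, ω).2| : ℤ) : ℝ)
      rw [hitBy_succ_of_exit ⟨r, hr1, hr2⟩]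
      rfl
  -- boundedness
  have hwkb : ∀ (v : s → ℤ), (∀ i, v i = 1 ∨ v i = -1) → ∀ r, |wk v r| ≤ |x| + r := by
    intro v hv r
    induction r with
    | zero => simp [hwk]
    | succ n ih =>
      have h1 : |vget v n| ≤ 1 := by
        rw [hvget]
        by_cases hn : Sum.inl n ∈ s
        · rcases hv ⟨Sum.inl n, hn⟩ with h' | h' <;> simp [hn, h']
        · simp [hn]
      have h2 : wk v (n + 1) = wk v n + vget v n := by
        rw [hwk]; simp [Finset.sum_range_succ, add_assoc]
      rw [h2]
      have h3 := abs_add_le (wk v n) (vget v n)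
      push_cast
      push_cast at ih
      linarith
  set C : ℝ := ((|z| + (|x| + t) + 1 : ℤ) : ℝ) with hC
  have hψC : ∀ v e, (∀ i, v i = 1 ∨ v i = -1) → (e = 1 ∨ e = -1) → |ψ v e| ≤ C := by
    intro v e hv he
    have he1 : |e| ≤ 1 := by rcases he with h' | h' <;> simp [h']
    simp only [hψ]
    by_cases hst : ∀ r ≤ t, (r, wk v r) ∈ D
    · rw [if_pos hst, abs_neg, abs_of_nonneg (by positivity), hC]
      have h1 := hwkb v hv t
      have h2 : |z - (wk v t + e)| ≤ |z| + (|x| + t) + 1 := by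
        have h3 := abs_sub z (wk v t + e)
        have h4 := abs_add_le (wk v t) e
        omega
      exact_mod_cast h2
    · rw [if_neg hst, abs_neg, abs_of_nonneg (by positivity), hC]
      have hble : hb v ≤ t := sInf_union_le _ _
      have h1 := hwkb v hv (hb v)
      have h2 : |z - wk v (hb v)| ≤ |z| + (|x| + t) + 1 := by
        have h3 := abs_sub z (wk v (hb v))
        have h5 : ((hb v : ℕ) : ℤ) ≤ (t : ℤ) := by exact_mod_cast hble
        omega
      exact_mod_cast h2
  -- the master identity
  have hmas := master (F := F) (elim_meas h) h.2.2.2.2 (good_ae h) s (Sum.inl t) hj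
    (h.2.2.1 t) ψ hψC
  -- identify the LHS
  have hL : ∫ ω, ψ (fun i : s => F i ω) (F (Sum.inl t) ω) ∂P = vv P ξ D x (t + 1) z := by
    rw [vv]
    apply integral_congr_ae
    filter_upwards with ω
    exact hW5 ω
  -- measurability and integrability of the two half-integrands
  have htupm : Measurable tup := measurable_pi_lambda _ fun i => elim_meas h i
  have hψm : ∀ e : ℤ, Measurable fun ω => ψ (tup ω) e :=
    fun e => (measurable_of_countable (fun v => ψ v e)).comp htupm
  have hψint : ∀ e : ℤ, (e = 1 ∨ e = -1) → Integrable (fun ω => ψ (tup ω) e) P := by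
    intro e he
    apply integrable_of_bdd (hψm e).aestronglyMeasurable (C := C)
    filter_upwards [good_ae h] with ω hg
    exact hψC (tup ω) e (fun i => hg i) he
  -- rewrite master as an integral of the average
  have hM : vv P ξ D x (t + 1) z = ∫ ω, (ψ (tup ω) 1 + ψ (tup ω) (-1)) / 2 ∂P := by
    rw [← hL, hmas]
    rw [integral_div, integral_add (hψint 1 (Or.inl rfl)) (hψint (-1) (Or.inr rfl))]
  -- conclude the two inequalities
  have hMle : ∀ c : ℤ, ((|c| : ℤ) : ℝ) ≤ ((max |c| 1 : ℤ) : ℝ) :=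
    fun c => Int.cast_le.mpr (le_max_left _ _)
  have h2M : ∀ c : ℤ, ((|c - 1| : ℤ) : ℝ) + ((|c + 1| : ℤ) : ℝ)
      = 2 * ((max |c| 1 : ℤ) : ℝ) := by
    intro c
    have h' : |c - 1| + |c + 1| = 2 * max |c| 1 := by have := abs_avg c; linarith
    exact_mod_cast h'
  constructor
  · rw [hM, vv]
    apply integral_mono_ae _ (integrable_stop_slice h D x z t)
    · filter_upwards [good_ae h] with ω hg
      rw [hW4 ω 1, hW4 ω (-1)]
      by_cases hst : ∀ r ≤ t, (r, walk ξ x r ω) ∈ D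
      · rw [if_pos hst, if_pos hst]
        have hsw : stopWalk ξ D t (x, ω) = walk ξ x t ω := by
          show walk ξ x (hitBy D (walk ξ x) t (x, ω).2) (x, ω).2 = _
          rw [(hitBy_succ_of_stay (Z := walk ξ x) (D := D) hst).2]
        rw [hsw]
        set a := z - walk ξ x t ω with ha
        have e1 : z - (walk ξ x t ω + 1) = a - 1 := by rw [ha]; ring
        have e2 : z - (walk ξ x t ω + -1) = a + 1 := by rw [ha]; ring
        rw [e1, e2]
        have := h2M a
        have := hMle a
        linarith
      · rw [if_neg hst, if_neg hst]
        apply le_of_eq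
        ring
    · apply Integrable.div_const
      exact (hψint 1 (Or.inl rfl)).add (hψint (-1) (Or.inr rfl))
  · rw [hM]
    have hsum : (vv P ξ D x t (z + 1) + vv P ξ D x t (z - 1)) / 2
        = ∫ ω, (-((|z + 1 - stopWalk ξ D t (x, ω)| : ℤ) : ℝ)
            + -((|z - 1 - stopWalk ξ D t (x, ω)| : ℤ) : ℝ)) / 2 ∂P := by
      rw [vv, vv, integral_div,
        integral_add (integrable_stop_slice h D x (z+1) t) (integrable_stop_slice h D x (z-1) t)]
    rw [hsum]
    apply integral_mono_ae
    · apply Integrable.div_const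
      exact (integrable_stop_slice h D x (z+1) t).add (integrable_stop_slice h D x (z-1) t)
    · apply Integrable.div_const
      exact (hψint 1 (Or.inl rfl)).add (hψint (-1) (Or.inr rfl))
    · filter_upwards [good_ae h] with ω hg
      rw [hW4 ω 1, hW4 ω (-1)]
      set b := z - stopWalk ξ D t (x, ω) with hbdef
      have e1 : z + 1 - stopWalk ξ D t (x, ω) = b + 1 := by rw [hbdef]; ring
      have e2 : z - 1 - stopWalk ξ D t (x, ω) = b - 1 := by rw [hbdef]; ring
      rw [e1, e2]
      by_cases hst : ∀ r ≤ t, (r, walk ξ x r ω) ∈ D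
      · rw [if_pos hst, if_pos hst]
        have hsw : stopWalk ξ D t (x, ω) = walk ξ x t ω := by
          show walk ξ x (hitBy D (walk ξ x) t (x, ω).2) (x, ω).2 = _
          rw [(hitBy_succ_of_stay (Z := walk ξ x) (D := D) hst).2]
        set a := z - walk ξ x t ω with ha
        have e3 : z - (walk ξ x t ω + 1) = a - 1 := by rw [ha]; ring
        have e4 : z - (walk ξ x t ω + -1) = a + 1 := by rw [ha]; ring
        rw [e3, e4]
        have hab : b = a := by rw [hbdef, ha, hsw]
        rw [hab]
        have := h2M a
        linarith
      · rw [if_neg hst, if_neg hst]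
        have := h2M b
        have := hMle b
        linarith

end OneStep



section ULevel

variable {P : Measure Ω} [IsProbabilityMeasure P] {ξ η : ℕ → Ω → ℤ} {D : Set (ℕ × ℤ)}
  {lam : Measure ℤ} [IsProbabilityMeasure lam]

lemma abs_pot_bound {z w u : ℤ} (hb : |u| ≤ |w| + (m : ℤ)) : |z - u| ≤ |w| + (|z| + m) := by
  have h5 : |z - u| ≤ |z| + |u| := abs_sub _ _
  omega

lemma integrable_stop_prod (h : IndepSSRWIncrements P ξ η) (hlam : FiniteFirstMoment lam)
    (D : Set (ℕ × ℤ)) (z : ℤ) (t : ℕ) :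
    Integrable (fun p : ℤ × Ω => -((|z - stopWalk ξ D t p| : ℤ) : ℝ)) (lam.prod P) := by
  apply integrable_prod_of_bdd (c := ((|z| + t : ℤ) : ℝ))
  · exact (measurable_of_countable fun w : ℤ => -((|z - w| : ℤ) : ℝ)).comp
      (measurable_stopWalk h.1 D t)
  · exact hlam
  · positivity
  · intro x
    filter_upwards [good_ae h] with ω hg
    have hgx : ∀ i, ξ i ω = 1 ∨ ξ i ω = -1 := fun i => by simpa using hg (Sum.inl i)
    have hb : |stopWalk ξ D t (x, ω)| ≤ |x| + t := by
      simpa using stopWalk_bound (ξ := ξ) (D := D) (t := t) (p := (x, ω)) hgx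
    have hZ : |z - stopWalk ξ D t (x, ω)| ≤ |x| + (|z| + t) := abs_pot_bound hb
    rw [abs_neg, abs_of_nonneg (by positivity)]
    exact_mod_cast hZ

lemma vv_meas (h : IndepSSRWIncrements P ξ η) (D : Set (ℕ × ℤ)) (t : ℕ) (z : ℤ) :
    StronglyMeasurable (fun x => vv P ξ D x t z) :=
  (((measurable_of_countable fun w : ℤ => -((|z - w| : ℤ) : ℝ)).comp
    (measurable_stopWalk h.1 D t)).stronglyMeasurable).integral_prod_right'

lemma vv_bdd (h : IndepSSRWIncrements P ξ η) (D : Set (ℕ × ℤ)) (x z : ℤ) (t : ℕ) :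
    |vv P ξ D x t z| ≤ |(x : ℝ)| + ((|z| + t : ℤ) : ℝ) := by
  have hb : ∀ᵐ ω ∂P, ‖-((|z - stopWalk ξ D t (x, ω)| : ℤ) : ℝ)‖
      ≤ |(x : ℝ)| + ((|z| + t : ℤ) : ℝ) := by
    filter_upwards [good_ae h] with ω hg
    have hgx : ∀ i, ξ i ω = 1 ∨ ξ i ω = -1 := fun i => by simpa using hg (Sum.inl i)
    have hb : |stopWalk ξ D t (x, ω)| ≤ |x| + t := by
      simpa using stopWalk_bound (ξ := ξ) (D := D) (t := t) (p := (x, ω)) hgx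
    have hZ : |z - stopWalk ξ D t (x, ω)| ≤ |x| + (|z| + t) := abs_pot_bound hb
    rw [Real.norm_eq_abs, abs_neg, abs_of_nonneg (by positivity)]
    exact_mod_cast hZ
  have := norm_integral_le_of_norm_le_const (μ := P) hb
  rw [Real.norm_eq_abs] at this
  simpa [vv] using this

lemma vv_int (h : IndepSSRWIncrements P ξ η) (hlam : FiniteFirstMoment lam)
    (D : Set (ℕ × ℤ)) (t : ℕ) (z : ℤ) :
    Integrable (fun x => vv P ξ D x t z) lam := by
  apply Integrable.mono' (g := fun x : ℤ => |(x : ℝ)| + ((|z| + t : ℤ) : ℝ))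
    (hlam.abs.add (integrable_const _)) (vv_meas h D t z).aestronglyMeasurable
  filter_upwards with x
  rw [Real.norm_eq_abs]
  exact vv_bdd h D x z t

lemma uu_eq (h : IndepSSRWIncrements P ξ η) (hlam : FiniteFirstMoment lam) (t : ℕ) (z : ℤ) :
    uu P ξ D lam t z = ∫ x, vv P ξ D x t z ∂lam := by
  rw [uu, integral_prod _ (integrable_stop_prod h hlam D z t)]
  rfl

lemma uu_step (h : IndepSSRWIncrements P ξ η) (hlam : FiniteFirstMoment lam) (t : ℕ) (z : ℤ) :
    uu P ξ D lam (t + 1) z ≤ uu P ξ D lam t z ∧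
      (uu P ξ D lam t (z + 1) + uu P ξ D lam t (z - 1)) / 2 ≤ uu P ξ D lam (t + 1) z := by
  constructor
  · rw [uu_eq h hlam, uu_eq h hlam]
    exact integral_mono (vv_int h hlam D (t+1) z) (vv_int h hlam D t z)
      fun x => (vv_step h D x z t).1
  · rw [uu_eq h hlam, uu_eq h hlam, uu_eq h hlam]
    have : (∫ x, vv P ξ D x t (z+1) ∂lam + ∫ x, vv P ξ D x t (z-1) ∂lam) / 2
        = ∫ x, (vv P ξ D x t (z+1) + vv P ξ D x t (z-1)) / 2 ∂lam := by
      rw [integral_div, integral_add (vv_int h hlam D t (z+1)) (vv_int h hlam D t (z-1))]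
    rw [this]
    exact integral_mono ((((vv_int h hlam D t (z+1))).add (vv_int h hlam D t (z-1))).div_const 2)
      (vv_int h hlam D (t+1) z) fun x => (vv_step h D x z t).2

lemma uu_antitone (h : IndepSSRWIncrements P ξ η) (hlam : FiniteFirstMoment lam) (z : ℤ) :
    Antitone (fun t => uu P ξ D lam t z) :=
  antitone_nat_of_succ_le fun t => (uu_step h hlam t z).1

lemma uu_bdd (h : IndepSSRWIncrements P ξ η) (hlam : FiniteFirstMoment lam) (t : ℕ) (z : ℤ) :
    |uu P ξ D lam t z| ≤ ((|z| + t : ℤ) : ℝ) + ∫ x : ℤ, |(x : ℝ)| ∂lam := by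
  rw [uu_eq h hlam]
  have h1 : |∫ x, vv P ξ D x t z ∂lam| ≤ ∫ x, |vv P ξ D x t z| ∂lam := by
    simpa [Real.norm_eq_abs] using
      norm_integral_le_integral_norm (μ := lam) (f := fun x => vv P ξ D x t z)
  refine h1.trans ?_
  have h2 : ∫ x, |vv P ξ D x t z| ∂lam ≤ ∫ x : ℤ, (|(x : ℝ)| + ((|z| + t : ℤ) : ℝ)) ∂lam := by
    apply integral_mono (vv_int h hlam D t z).abs (hlam.abs.add (integrable_const _))
    intro x
    exact vv_bdd h D x z t
  refine h2.trans ?_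
  rw [integral_add hlam.abs (integrable_const _), integral_const]
  simp [add_comm]

lemma potential_eq_integral (hlam : FiniteFirstMoment lam) (z : ℤ) :
    potential lam z = ∫ x : ℤ, -((|z - x| : ℤ) : ℝ) ∂lam := by
  have hf : Integrable (fun w : ℤ => ((|z - w| : ℤ) : ℝ)) lam := by
    apply Integrable.mono' (g := fun w : ℤ => ((|z| : ℤ) : ℝ) + |(w : ℝ)|)
      ((integrable_const _).add hlam.abs) (measurable_of_countable _).aestronglyMeasurable
    filter_upwards with w
    rw [Real.norm_eq_abs, abs_of_nonneg (by positivity)]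
    have h5 : |z - w| ≤ |z| + |w| := abs_sub _ _
    exact_mod_cast h5
  have h2 : ∫ x : ℤ, -((|z - x| : ℤ) : ℝ) ∂lam = -∫ x : ℤ, ((|z - x| : ℤ) : ℝ) ∂lam :=
    integral_neg _
  rw [potential, h2, integral_countable' hf]
  congr 1
  exact tsum_congr fun w => by rw [smul_eq_mul, mul_comm]; rfl

lemma uu_zero (h : IndepSSRWIncrements P ξ η) (hlam : FiniteFirstMoment lam) (z : ℤ) :
    uu P ξ D lam 0 z = potential lam z := by
  rw [uu_eq h hlam, potential_eq_integral hlam]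
  apply integral_congr_ae
  filter_upwards with x
  have hs : ∀ ω : Ω, stopWalk ξ D 0 (x, ω) = x := by
    intro ω
    show walk ξ x (hitBy D (walk ξ x) 0 (x, ω).2) (x, ω).2 = x
    rw [hitBy_zero, walk_zero]
  rw [vv]
  rw [show (fun ω => -((|z - stopWalk ξ D 0 (x, ω)| : ℤ) : ℝ))
    = fun _ : Ω => -((|z - x| : ℤ) : ℝ) from funext fun ω => by rw [hs ω]]
  simp

lemma potential_muRootT (h : IndepSSRWIncrements P ξ η) (hlam : FiniteFirstMoment lam)
    (T : ℕ) (y : ℤ) :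
    potential (muRootT P ξ D lam T) y = uu P ξ D lam T y := by
  have hmu : muRootT P ξ D lam T = Measure.map (stopWalk ξ D T) (lam.prod P) := rfl
  rw [hmu, potential_map_eq (measurable_stopWalk h.1 D T)
    ((integrable_stop_prod h hlam D y T).neg.congr
    (Filter.Eventually.of_forall fun p => by simp))]
  rfl

end ULevel



section Limit

variable {P : Measure Ω} [IsProbabilityMeasure P] {ξ η : ℕ → Ω → ℤ} {D : Set (ℕ × ℤ)}
  {lam : Measure ℤ} [IsProbabilityMeasure lam]

lemma tendsto_ae_hitWalk (hfin : ∀ᵐ p ∂(lam.prod P), ∃ t, (t, walk ξ p.1 t p.2) ∉ D) :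
    ∀ᵐ p ∂(lam.prod P), Filter.Tendsto (fun n => ((stopWalk ξ D n p : ℤ) : ℝ))
      Filter.atTop (nhds ((hitWalk ξ D p : ℤ) : ℝ)) := by
  filter_upwards [hfin] with p hp
  have hev : ∀ᶠ n in Filter.atTop, ((hitWalk ξ D p : ℤ) : ℝ) = ((stopWalk ξ D n p : ℤ) : ℝ) := by
    rw [Filter.eventually_atTop]
    refine ⟨hit D (walk ξ p.1) p.2, fun n hn => ?_⟩
    rw [stopWalk, hitWalk, hitBy_eq_hit hp hn]
  exact Filter.Tendsto.congr' hev tendsto_const_nhds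

lemma measurable_hitWalk_cast (h : IndepSSRWIncrements P ξ η) (D : Set (ℕ × ℤ)) (w : ℤ) :
    Measurable fun p : ℤ × Ω => ((|w - hitWalk ξ D p| : ℤ) : ℝ) :=
  (measurable_of_countable (fun v : ℤ => ((|w - v| : ℤ) : ℝ))).comp (measurable_hitWalk h.1 D)

lemma integrable_hitWalk (h : IndepSSRWIncrements P ξ η)
    (hfin : ∀ᵐ p ∂(lam.prod P), ∃ t, (t, walk ξ p.1 t p.2) ∉ D)
    (hUI : UniformIntegrable
      (fun (t : ℕ) (p : ℤ × Ω) => ((walk ξ p.1 (hitBy D (walk ξ p.1) t p.2) p.2 : ℤ) : ℝ))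
      1 (lam.prod P)) :
    Integrable (fun p => ((hitWalk ξ D p : ℤ) : ℝ)) (lam.prod P) := by
  obtain ⟨hm, hunif, C, hC⟩ := hUI
  have hgm : Measurable fun p : ℤ × Ω => ((hitWalk ξ D p : ℤ) : ℝ) :=
    (measurable_of_countable (fun v : ℤ => ((v : ℤ) : ℝ))).comp (measurable_hitWalk h.1 D)
  have hsn := Lp.eLpNorm_lim_le_liminf_eLpNorm (p := 1) hm
    (fun p => ((hitWalk ξ D p : ℤ) : ℝ)) (tendsto_ae_hitWalk hfin)
  have hliminf : Filter.atTop.liminf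
      (fun n => eLpNorm (fun p : ℤ × Ω =>
        ((walk ξ p.1 (hitBy D (walk ξ p.1) n p.2) p.2 : ℤ) : ℝ)) 1 (lam.prod P)) ≤ (C : ENNReal) :=
    Filter.liminf_le_of_frequently_le' ((Filter.Eventually.of_forall hC).frequently)
  rw [← memLp_one_iff_integrable]
  exact ⟨hgm.aestronglyMeasurable, lt_of_le_of_lt (hsn.trans hliminf) ENNReal.coe_lt_top⟩

lemma integrable_hit_pot (h : IndepSSRWIncrements P ξ η)
    (hintg : Integrable (fun p => ((hitWalk ξ D p : ℤ) : ℝ)) (lam.prod P)) (w : ℤ) :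
    Integrable (fun p => ((|w - hitWalk ξ D p| : ℤ) : ℝ)) (lam.prod P) := by
  apply Integrable.mono' (g := fun p => ((|w| : ℤ) : ℝ) + |((hitWalk ξ D p : ℤ) : ℝ)|)
    ((integrable_const _).add hintg.abs) (measurable_hitWalk_cast h D w).aestronglyMeasurable
  filter_upwards with p
  rw [Real.norm_eq_abs, abs_of_nonneg (by positivity)]
  have h5 : |w - hitWalk ξ D p| ≤ |w| + |hitWalk ξ D p| := abs_sub _ _
  exact_mod_cast h5

lemma potential_muRoot_eq (h : IndepSSRWIncrements P ξ η)
    (hintg : Integrable (fun p => ((hitWalk ξ D p : ℤ) : ℝ)) (lam.prod P)) (z : ℤ) :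
    potential (muRoot P ξ D lam) z
      = ∫ p, -((|z - hitWalk ξ D p| : ℤ) : ℝ) ∂(lam.prod P) := by
  have hmu : muRoot P ξ D lam = Measure.map (hitWalk ξ D) (lam.prod P) := rfl
  rw [hmu, potential_map_eq (measurable_hitWalk h.1 D) (integrable_hit_pot h hintg z)]

lemma potential_muRoot_bdd (h : IndepSSRWIncrements P ξ η)
    (hintg : Integrable (fun p => ((hitWalk ξ D p : ℤ) : ℝ)) (lam.prod P)) (w : ℤ) :
    |potential (muRoot P ξ D lam) w|
      ≤ ((|w| : ℤ) : ℝ) + ∫ p, |((hitWalk ξ D p : ℤ) : ℝ)| ∂(lam.prod P) := by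
  rw [potential_muRoot_eq h hintg w]
  have h1 : |∫ p, -((|w - hitWalk ξ D p| : ℤ) : ℝ) ∂(lam.prod P)|
      ≤ ∫ p, ((|w - hitWalk ξ D p| : ℤ) : ℝ) ∂(lam.prod P) := by
    have := norm_integral_le_integral_norm (μ := lam.prod P)
      (f := fun p => -((|w - hitWalk ξ D p| : ℤ) : ℝ))
    rw [Real.norm_eq_abs] at this
    refine this.trans (le_of_eq (integral_congr_ae ?_))
    filter_upwards with p
    rw [Real.norm_eq_abs, abs_neg, abs_of_nonneg (by positivity)]
  refine h1.trans ?_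
  have hgint : Integrable (fun p => ((|w| : ℤ) : ℝ) + |((hitWalk ξ D p : ℤ) : ℝ)|)
      (lam.prod P) := (integrable_const _).add hintg.abs
  have h2 : ∫ p, ((|w - hitWalk ξ D p| : ℤ) : ℝ) ∂(lam.prod P)
      ≤ ∫ p, (((|w| : ℤ) : ℝ) + |((hitWalk ξ D p : ℤ) : ℝ)|) ∂(lam.prod P) := by
    apply integral_mono (integrable_hit_pot h hintg w) hgint
    intro p
    have h5 : |w - hitWalk ξ D p| ≤ |w| + |hitWalk ξ D p| := abs_sub _ _
    show ((|w - hitWalk ξ D p| : ℤ) : ℝ) ≤ ((|w| : ℤ) : ℝ) + |((hitWalk ξ D p : ℤ) : ℝ)|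
    push_cast
    exact_mod_cast h5
  refine h2.trans ?_
  rw [integral_add (integrable_const _) hintg.abs, integral_const]
  simp

lemma uu_ge_muRoot (h : IndepSSRWIncrements P ξ η) (hlam : FiniteFirstMoment lam)
    (hfin : ∀ᵐ p ∂(lam.prod P), ∃ t, (t, walk ξ p.1 t p.2) ∉ D)
    (hUI : UniformIntegrable
      (fun (t : ℕ) (p : ℤ × Ω) => ((walk ξ p.1 (hitBy D (walk ξ p.1) t p.2) p.2 : ℤ) : ℝ))
      1 (lam.prod P)) (t : ℕ) (z : ℤ) :
    potential (muRoot P ξ D lam) z ≤ uu P ξ D lam t z := by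
  have hintg := integrable_hitWalk h hfin hUI
  have hpot := potential_muRoot_eq h hintg z
  obtain ⟨hmAE, hunif, C, hC⟩ := hUI
  have hmem : MemLp (fun p => ((hitWalk ξ D p : ℤ) : ℝ)) 1 (lam.prod P) :=
    memLp_one_iff_integrable.mpr hintg
  have htend := tendsto_ae_hitWalk (lam := lam) (P := P) (ξ := ξ) (D := D) hfin
  have hvit := tendsto_Lp_finite_of_tendsto_ae (μ := lam.prod P) (le_refl 1)
    ENNReal.one_ne_top hmAE hmem hunif htend
  have htoReal : Filter.Tendsto
      (fun n => (eLpNorm ((fun p : ℤ × Ω => ((stopWalk ξ D n p : ℤ) : ℝ))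
        - fun p => ((hitWalk ξ D p : ℤ) : ℝ)) 1 (lam.prod P)).toReal)
      Filter.atTop (nhds 0) := by
    have := (ENNReal.tendsto_toReal (a := 0) (by simp)).comp hvit
    simpa [stopWalk, Function.comp_def] using this
  have hfint : ∀ n, Integrable (fun p : ℤ × Ω => ((stopWalk ξ D n p : ℤ) : ℝ)) (lam.prod P) :=
    fun n => memLp_one_iff_integrable.mp ⟨hmAE n, lt_of_le_of_lt (hC n) ENNReal.coe_lt_top⟩
  have hintLz : Integrable (fun p => -((|z - hitWalk ξ D p| : ℤ) : ℝ)) (lam.prod P) :=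
    (integrable_hit_pot h hintg z).neg
  have habs : ∀ n, |uu P ξ D lam n z - ∫ p, -((|z - hitWalk ξ D p| : ℤ) : ℝ) ∂(lam.prod P)|
      ≤ (eLpNorm ((fun p : ℤ × Ω => ((stopWalk ξ D n p : ℤ) : ℝ))
        - fun p => ((hitWalk ξ D p : ℤ) : ℝ)) 1 (lam.prod P)).toReal := by
    intro n
    have hsub : uu P ξ D lam n z - ∫ p, -((|z - hitWalk ξ D p| : ℤ) : ℝ) ∂(lam.prod P)
        = ∫ p, (-((|z - stopWalk ξ D n p| : ℤ) : ℝ) - (-((|z - hitWalk ξ D p| : ℤ) : ℝ)))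
            ∂(lam.prod P) := by
      rw [uu, integral_sub (integrable_stop_prod h hlam D z n) hintLz]
    rw [hsub]
    have hptw : ∀ p : ℤ × Ω,
        |(-((|z - stopWalk ξ D n p| : ℤ) : ℝ) - (-((|z - hitWalk ξ D p| : ℤ) : ℝ)))|
          ≤ |((stopWalk ξ D n p : ℤ) : ℝ) - ((hitWalk ξ D p : ℤ) : ℝ)| := by
      intro p
      have hZ : |(|z - stopWalk ξ D n p| - |z - hitWalk ξ D p|)|
          ≤ |stopWalk ξ D n p - hitWalk ξ D p| := by
        have h6 := abs_abs_sub_abs_le_abs_sub (z - stopWalk ξ D n p) (z - hitWalk ξ D p)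
        have heq : (z - stopWalk ξ D n p) - (z - hitWalk ξ D p)
            = -(stopWalk ξ D n p - hitWalk ξ D p) := by ring
        rw [heq, abs_neg] at h6
        exact h6
      have hfn : ((stopWalk ξ D n p : ℤ) : ℝ) - ((hitWalk ξ D p : ℤ) : ℝ)
          = ((stopWalk ξ D n p - hitWalk ξ D p : ℤ) : ℝ) := by push_cast; ring
      rw [hfn]
      have hcast : |(((|z - stopWalk ξ D n p| : ℤ) : ℝ) - ((|z - hitWalk ξ D p| : ℤ) : ℝ))|
          ≤ |((stopWalk ξ D n p - hitWalk ξ D p : ℤ) : ℝ)| := by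
        have h7 : ((|(|z - stopWalk ξ D n p| - |z - hitWalk ξ D p|)| : ℤ) : ℝ)
            ≤ ((|stopWalk ξ D n p - hitWalk ξ D p| : ℤ) : ℝ) := Int.cast_le.mpr hZ
        calc |(((|z - stopWalk ξ D n p| : ℤ) : ℝ) - ((|z - hitWalk ξ D p| : ℤ) : ℝ))|
            = ((|(|z - stopWalk ξ D n p| - |z - hitWalk ξ D p|)| : ℤ) : ℝ) := by
              push_cast
              try ring_nf
          _ ≤ ((|stopWalk ξ D n p - hitWalk ξ D p| : ℤ) : ℝ) := h7
          _ = |((stopWalk ξ D n p - hitWalk ξ D p : ℤ) : ℝ)| := by push_cast; ring_nf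
      calc |(-((|z - stopWalk ξ D n p| : ℤ) : ℝ) - (-((|z - hitWalk ξ D p| : ℤ) : ℝ)))|
          = |(((|z - stopWalk ξ D n p| : ℤ) : ℝ) - ((|z - hitWalk ξ D p| : ℤ) : ℝ))| := by
            rw [show (-((|z - stopWalk ξ D n p| : ℤ) : ℝ) - (-((|z - hitWalk ξ D p| : ℤ) : ℝ)))
              = -((((|z - stopWalk ξ D n p| : ℤ) : ℝ) - ((|z - hitWalk ξ D p| : ℤ) : ℝ))) by ring,
              abs_neg]
        _ ≤ _ := hcast
    have hintsub : Integrable ((fun p : ℤ × Ω => ((stopWalk ξ D n p : ℤ) : ℝ))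
        - fun p => ((hitWalk ξ D p : ℤ) : ℝ)) (lam.prod P) := (hfint n).sub hintg
    have hnorm : |∫ p, (-((|z - stopWalk ξ D n p| : ℤ) : ℝ)
        - (-((|z - hitWalk ξ D p| : ℤ) : ℝ))) ∂(lam.prod P)|
          ≤ ∫ p, ‖((fun p : ℤ × Ω => ((stopWalk ξ D n p : ℤ) : ℝ))
            - fun p => ((hitWalk ξ D p : ℤ) : ℝ)) p‖ ∂(lam.prod P) := by
      have h1 := norm_integral_le_integral_norm (μ := lam.prod P)
        (f := fun p => (-((|z - stopWalk ξ D n p| : ℤ) : ℝ)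
          - (-((|z - hitWalk ξ D p| : ℤ) : ℝ))))
      rw [Real.norm_eq_abs] at h1
      refine h1.trans ?_
      apply integral_mono ((integrable_stop_prod h hlam D z n).sub hintLz).norm
        hintsub.norm
      intro p
      simp only [Pi.sub_apply, Real.norm_eq_abs]
      exact hptw p
    refine hnorm.trans (le_of_eq ?_)
    rw [integral_norm_eq_lintegral_enorm hintsub.aestronglyMeasurable,
      eLpNorm_one_eq_lintegral_enorm]
  have htendu : Filter.Tendsto (fun n => uu P ξ D lam n z) Filter.atTop
      (nhds (∫ p, -((|z - hitWalk ξ D p| : ℤ) : ℝ) ∂(lam.prod P))) := by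
    rw [tendsto_iff_dist_tendsto_zero]
    apply squeeze_zero (fun n => dist_nonneg) _ htoReal
    intro n
    rw [Real.dist_eq]
    exact habs n
  rw [hpot]
  apply le_of_tendsto htendu
  rw [Filter.eventually_atTop]
  exact ⟨t, fun s hs => uu_antitone h hlam z hs⟩

end Limit



section YSide

variable {P : Measure Ω} [IsProbabilityMeasure P] {ξ η : ℕ → Ω → ℤ} {D : Set (ℕ × ℤ)}
  {lam : Measure ℤ} [IsProbabilityMeasure lam]

lemma stopping_le_meas {y : ℤ} {τ : Ω → ℕ} (h : IndepSSRWIncrements P ξ η)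
    (hτ : IsNatStopping (walk η y) τ) (n : ℕ) : MeasurableSet {ω | τ ω ≤ n} := by
  obtain ⟨E, hE, hpre⟩ := MeasurableSpace.measurableSet_comap.mp (hτ n)
  rw [← hpre]
  have hym : Measurable fun ω => (fun i : Fin (n + 1) => walk η y i ω) :=
    measurable_pi_lambda _ fun i => (measurable_walk h.2.1 i).comp measurable_prodMk_left
  exact hym hE

lemma y_step (h : IndepSSRWIncrements P ξ η) (hlam : FiniteFirstMoment lam)
    (y : ℤ) (τ : Ω → ℕ) (hτ : IsNatStopping (walk η y) τ) (n T : ℕ) (hnT : n < T) :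
    ∫ ω, (if n + 1 ≤ τ ω then (1:ℝ) else 0)
        * uu P ξ D lam (T - (n+1)) (walk η y (n+1) ω) ∂P
      ≤ ∫ ω, (if n + 1 ≤ τ ω then (1:ℝ) else 0)
        * uu P ξ D lam (T - n) (walk η y n ω) ∂P := by
  classical
  set F : ℕ ⊕ ℕ → Ω → ℤ := Sum.elim ξ η with hF
  set s : Finset (ℕ ⊕ ℕ) := (Finset.range n).image Sum.inr with hs
  have hj : (Sum.inr n : ℕ ⊕ ℕ) ∉ s := by simp [hs, Finset.mem_image]
  obtain ⟨E, hE, hpre⟩ := MeasurableSpace.measurableSet_comap.mp (hτ n)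
  set vget : (s → ℤ) → ℕ → ℤ :=
    fun v i => if hi : Sum.inr i ∈ s then v ⟨Sum.inr i, hi⟩ else 0 with hvget
  set ywk : (s → ℤ) → ℕ → ℤ := fun v r => y + ∑ i ∈ Finset.range r, vget v i with hywk
  set χ : (s → ℤ) → ℝ :=
    fun v => if (fun i : Fin (n + 1) => ywk v i) ∈ E then 0 else 1 with hχ
  set ψ : (s → ℤ) → ℤ → ℝ :=
    fun v e => χ v * uu P ξ D lam (T - (n+1)) (ywk v n + e) with hψ
  set tup : Ω → (s → ℤ) := fun ω i => F i ω with htup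
  have hW1 : ∀ ω, ∀ r ≤ n, ywk (tup ω) r = walk η y r ω := by
    intro ω r hr
    rw [hywk, walk]
    simp only [add_right_inj]
    apply Finset.sum_congr rfl
    intro i hi
    have hins : Sum.inr i ∈ s := by
      rw [hs]
      exact Finset.mem_image_of_mem _ (Finset.mem_range.mpr
        (lt_of_lt_of_le (Finset.mem_range.mp hi) hr))
    rw [hvget]
    simp only [hins, dif_pos]
    rfl
  have hInd : ∀ ω, χ (tup ω) = if n + 1 ≤ τ ω then (1:ℝ) else 0 := by
    intro ω
    have hfe : (fun i : Fin (n + 1) => ywk (tup ω) i) = fun i : Fin (n + 1) => walk η y i ω := by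
      funext i
      exact hW1 ω i (Nat.lt_succ_iff.mp i.isLt)
    rw [hχ]
    simp only [hfe]
    have hmem : ((fun i : Fin (n + 1) => walk η y i ω) ∈ E) ↔ τ ω ≤ n := by
      constructor
      · intro hm
        have : ω ∈ (fun ω => (fun i : Fin (n + 1) => walk η y i ω)) ⁻¹' E := hm
        rw [hpre] at this
        exact this
      · intro hm
        have : ω ∈ (fun ω => (fun i : Fin (n + 1) => walk η y i ω)) ⁻¹' E := by
          rw [hpre]; exact hm
        exact this
    by_cases hle : τ ω ≤ n
    · rw [if_pos (hmem.mpr hle), if_neg (by omega)]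
    · rw [if_neg (fun hm => hle (hmem.mp hm)), if_pos (by omega)]
  have hPt : ∀ ω (e : ℤ), ψ (tup ω) e
      = (if n + 1 ≤ τ ω then (1:ℝ) else 0)
        * uu P ξ D lam (T - (n+1)) (walk η y n ω + e) := by
    intro ω e
    rw [hψ]
    simp only []
    rw [hInd ω, hW1 ω n (le_refl n)]
  -- boundedness
  have hwkb : ∀ (v : s → ℤ), (∀ i, v i = 1 ∨ v i = -1) → ∀ r, |ywk v r| ≤ |y| + r := by
    intro v hv r
    induction r with
    | zero => simp [hywk]
    | succ m ih =>
      have h1 : |vget v m| ≤ 1 := by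
        rw [hvget]
        by_cases hm : Sum.inr m ∈ s
        · rcases hv ⟨Sum.inr m, hm⟩ with h' | h' <;> simp [hm, h']
        · simp [hm]
      have h2 : ywk v (m + 1) = ywk v m + vget v m := by
        rw [hywk]; simp [Finset.sum_range_succ, add_assoc]
      rw [h2]
      have h3 := abs_add_le (ywk v m) (vget v m)
      push_cast
      push_cast at ih
      linarith
  set C0 : ℝ := ∫ x : ℤ, |(x : ℝ)| ∂lam with hC0
  set C : ℝ := ((|y| + n + 1 + T : ℤ) : ℝ) + C0 with hCdef
  have hψC : ∀ v e, (∀ i, v i = 1 ∨ v i = -1) → (e = 1 ∨ e = -1) → |ψ v e| ≤ C := by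
    intro v e hv he
    have he1 : |e| ≤ 1 := by rcases he with h' | h' <;> simp [h']
    rw [hψ]
    simp only []
    rw [abs_mul]
    have hχ1 : |χ v| ≤ 1 := by
      rw [hχ]
      by_cases hm : (fun i : Fin (n + 1) => ywk v i) ∈ E <;> simp [hm]
    have hu := uu_bdd (D := D) h hlam (T - (n+1)) (ywk v n + e)
    have hz : |ywk v n + e| ≤ |y| + n + 1 := by
      have := hwkb v hv n
      have h4 := abs_add_le (ywk v n) e
      omega
    have hcast : ((|ywk v n + e| + (T - (n+1) : ℕ) : ℤ) : ℝ)
        ≤ ((|y| + n + 1 + T : ℤ) : ℝ) := by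
      apply Int.cast_le.mpr
      have h6 : ((T - (n+1) : ℕ) : ℤ) ≤ (T : ℤ) := by exact_mod_cast Nat.sub_le T (n+1)
      omega
    calc |χ v| * |uu P ξ D lam (T - (n+1)) (ywk v n + e)|
        ≤ 1 * |uu P ξ D lam (T - (n+1)) (ywk v n + e)| := by
          apply mul_le_mul_of_nonneg_right hχ1 (abs_nonneg _)
      _ = |uu P ξ D lam (T - (n+1)) (ywk v n + e)| := one_mul _
      _ ≤ ((|ywk v n + e| + (T - (n+1) : ℕ) : ℤ) : ℝ) + C0 := hu
      _ ≤ C := by rw [hCdef]; linarith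
  have hmas := master (F := F) (elim_meas h) h.2.2.2.2 (good_ae h) s (Sum.inr n) hj
    (h.2.2.2.1 n) ψ hψC
  -- identify LHS
  have hL : ∫ ω, ψ (fun i : s => F i ω) (F (Sum.inr n) ω) ∂P
      = ∫ ω, (if n + 1 ≤ τ ω then (1:ℝ) else 0)
          * uu P ξ D lam (T - (n+1)) (walk η y (n+1) ω) ∂P := by
    apply integral_congr_ae
    filter_upwards with ω
    have : F (Sum.inr n) ω = η n ω := rfl
    rw [hPt ω (F (Sum.inr n) ω), this, ← walk_succ]
  -- measurability and integrability
  have htupm : Measurable tup := measurable_pi_lambda _ fun i => elim_meas h i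
  have hψm : ∀ e : ℤ, Measurable fun ω => ψ (tup ω) e :=
    fun e => (measurable_of_countable (fun v => ψ v e)).comp htupm
  have hψint : ∀ e : ℤ, (e = 1 ∨ e = -1) → Integrable (fun ω => ψ (tup ω) e) P := by
    intro e he
    apply integrable_of_bdd (hψm e).aestronglyMeasurable (C := C)
    filter_upwards [good_ae h] with ω hg
    exact hψC (tup ω) e (fun i => hg i) he
  rw [hL] at hmas
  rw [hmas]
  have havg : (∫ ω, ψ (fun i : s => F i ω) 1 ∂P + ∫ ω, ψ (fun i : s => F i ω) (-1) ∂P) / 2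
      = ∫ ω, (ψ (tup ω) 1 + ψ (tup ω) (-1)) / 2 ∂P := by
    rw [integral_div, integral_add (hψint 1 (Or.inl rfl)) (hψint (-1) (Or.inr rfl))]
  rw [havg]
  -- RHS integrand is measurable as a function of the tuple as well
  set φ : (s → ℤ) → ℝ := fun v => χ v * uu P ξ D lam (T - n) (ywk v n) with hφ
  have hRHS : ∫ ω, (if n + 1 ≤ τ ω then (1:ℝ) else 0)
      * uu P ξ D lam (T - n) (walk η y n ω) ∂P = ∫ ω, φ (tup ω) ∂P := by
    apply integral_congr_ae
    filter_upwards with ω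
    rw [hφ]
    simp only []
    rw [hInd ω, hW1 ω n (le_refl n)]
  rw [hRHS]
  have hφm : Measurable fun ω => φ (tup ω) :=
    (measurable_of_countable φ).comp htupm
  have hφint : Integrable (fun ω => φ (tup ω)) P := by
    apply integrable_of_bdd hφm.aestronglyMeasurable (C := C)
    filter_upwards [good_ae h] with ω hg
    rw [hφ]
    simp only []
    rw [abs_mul]
    have hχ1 : |χ (tup ω)| ≤ 1 := by
      rw [hχ]
      by_cases hm : (fun i : Fin (n + 1) => ywk (tup ω) i) ∈ E <;> simp [hm]
    have hu := uu_bdd (D := D) h hlam (T - n) (ywk (tup ω) n)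
    have hz : |ywk (tup ω) n| ≤ |y| + n := hwkb (tup ω) (fun i => hg i) n
    have hcast : ((|ywk (tup ω) n| + (T - n : ℕ) : ℤ) : ℝ)
        ≤ ((|y| + n + 1 + T : ℤ) : ℝ) := by
      apply Int.cast_le.mpr
      have h6 : ((T - n : ℕ) : ℤ) ≤ (T : ℤ) := by exact_mod_cast Nat.sub_le T n
      omega
    calc |χ (tup ω)| * |uu P ξ D lam (T - n) (ywk (tup ω) n)|
        ≤ 1 * |uu P ξ D lam (T - n) (ywk (tup ω) n)| :=
          mul_le_mul_of_nonneg_right hχ1 (abs_nonneg _)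
      _ = _ := one_mul _
      _ ≤ ((|ywk (tup ω) n| + (T - n : ℕ) : ℤ) : ℝ) + C0 := hu
      _ ≤ C := by rw [hCdef]; linarith
  apply integral_mono_ae (Integrable.div_const
    ((hψint 1 (Or.inl rfl)).add (hψint (-1) (Or.inr rfl))) 2) hφint
  filter_upwards with ω
  show (ψ (tup ω) 1 + ψ (tup ω) (-1)) / 2 ≤ φ (tup ω)
  rw [hPt ω 1, hPt ω (-1), hφ]
  simp only []
  rw [hInd ω, hW1 ω n (le_refl n)]
  by_cases hle : n + 1 ≤ τ ω
  · rw [if_pos hle]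
    simp only [one_mul]
    have hstep := (uu_step (D := D) h hlam (T - (n+1)) (walk η y n ω)).2
    have hTn : T - (n+1) + 1 = T - n := by omega
    rw [hTn] at hstep
    have heq : walk η y n ω + -1 = walk η y n ω - 1 := by ring
    rw [heq]
    exact hstep
  · rw [if_neg hle]
    simp

end YSide



lemma potential_lam_bdd {lam : Measure ℤ} [IsProbabilityMeasure lam]
    (hlam : FiniteFirstMoment lam) (w : ℤ) :
    |potential lam w| ≤ ((|w| : ℤ) : ℝ) + ∫ x : ℤ, |(x : ℝ)| ∂lam := by
  rw [potential_eq_integral hlam w]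
  have hint : Integrable (fun x : ℤ => ((|w - x| : ℤ) : ℝ)) lam := by
    apply Integrable.mono' (g := fun x : ℤ => ((|w| : ℤ) : ℝ) + |(x : ℝ)|)
      ((integrable_const _).add hlam.abs) (measurable_of_countable _).aestronglyMeasurable
    filter_upwards with x
    rw [Real.norm_eq_abs, abs_of_nonneg (by positivity)]
    have h5 : |w - x| ≤ |w| + |x| := abs_sub _ _
    exact_mod_cast h5
  have h1 : |∫ x : ℤ, -((|w - x| : ℤ) : ℝ) ∂lam| ≤ ∫ x : ℤ, ((|w - x| : ℤ) : ℝ) ∂lam := by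
    have := norm_integral_le_integral_norm (μ := lam) (f := fun x : ℤ => -((|w - x| : ℤ) : ℝ))
    rw [Real.norm_eq_abs] at this
    refine this.trans (le_of_eq (integral_congr_ae ?_))
    filter_upwards with x
    rw [Real.norm_eq_abs, abs_neg, abs_of_nonneg (by positivity)]
  refine h1.trans ?_
  have h2 : ∫ x : ℤ, ((|w - x| : ℤ) : ℝ) ∂lam
      ≤ ∫ x : ℤ, (((|w| : ℤ) : ℝ) + |(x : ℝ)|) ∂lam := by
    apply integral_mono hint ((integrable_const _).add hlam.abs)
    intro x
    have h5 : |w - x| ≤ |w| + |x| := abs_sub _ _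
    show ((|w - x| : ℤ) : ℝ) ≤ ((|w| : ℤ) : ℝ) + |(x : ℝ)|
    push_cast
    exact_mod_cast h5
  refine h2.trans ?_
  rw [integral_add (integrable_const _) hlam.abs, integral_const]
  simp

lemma stopping_meas {P : Measure Ω} [IsProbabilityMeasure P] {ξ η : ℕ → Ω → ℤ}
    {y : ℤ} {τ : Ω → ℕ} (h : IndepSSRWIncrements P ξ η)
    (hτ : IsNatStopping (walk η y) τ) : Measurable τ := by
  apply measurable_to_countable'
  intro k
  rcases k with _ | k
  · have : τ ⁻¹' {0} = {ω | τ ω ≤ 0} := by ext ω; simp [Nat.le_zero]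
    rw [this]
    exact stopping_le_meas h hτ 0
  · have : τ ⁻¹' {k + 1} = {ω | τ ω ≤ k + 1} ∩ {ω | τ ω ≤ k}ᶜ := by
      ext ω
      simp only [Set.mem_preimage, Set.mem_singleton_iff, Set.mem_inter_iff, Set.mem_compl_iff,
        Set.mem_setOf_eq]
      omega
    rw [this]
    exact (stopping_le_meas h hτ (k + 1)).inter (stopping_le_meas h hτ k).compl


/-- for every `y ∈ ℤ` and every `{0,…,T}`-valued stopping time `τ` of the
natural filtration of `Y`,
`U_{μ^{Root}_T}(y) ≥ E_y[U_{μ^{Root}}(Y_τ) 1_{τ < T} + U_λ(Y_τ) 1_{τ = T}]`. -/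
theorem root_optimal_stopping_upper_bound
    (P : Measure Ω) [IsProbabilityMeasure P] (ξ η : ℕ → Ω → ℤ)
    (h : IndepSSRWIncrements P ξ η)
    (D : Set (ℕ × ℤ)) (hD : IsRootCont D)
    (lam : Measure ℤ) [IsProbabilityMeasure lam] (hlam : FiniteFirstMoment lam)
    (T : ℕ)
    (hfin : ∀ᵐ p ∂(lam.prod P), ∃ t, (t, walk ξ p.1 t p.2) ∉ D)
    (hUI : UniformIntegrable
      (fun (t : ℕ) (p : ℤ × Ω) => ((walk ξ p.1 (hitBy D (walk ξ p.1) t p.2) p.2 : ℤ) : ℝ))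
      1 (lam.prod P))
    (y : ℤ) (τ : Ω → ℕ) (hτ : IsNatStopping (walk η y) τ) (hτT : ∀ ω, τ ω ≤ T) :
    potential (muRootT P ξ D lam T) y
      ≥ ∫ ω,
          ((if τ ω < T then potential (muRoot P ξ D lam) (walk η y (τ ω) ω) else 0)
          + (if τ ω = T then potential lam (walk η y (τ ω) ω) else 0)) ∂P := by
  classical
  have hτm : Measurable τ := stopping_meas h hτ
  have hintg := integrable_hitWalk h hfin hUI
  have hYm : ∀ i : ℕ, Measurable (fun ω => walk η y i ω) :=
    fun i => (measurable_walk h.2.1 i).comp measurable_prodMk_left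
  have hC0nn : (0:ℝ) ≤ ∫ x : ℤ, |(x : ℝ)| ∂lam := integral_nonneg fun x => abs_nonneg _
  have hCRnn : (0:ℝ) ≤ ∫ p, |((hitWalk ξ D p : ℤ) : ℝ)| ∂(lam.prod P) :=
    integral_nonneg fun p => abs_nonneg _
  -- integrability of "indicator times uu" integrands
  have hindint : ∀ (n : ℕ) (c : Ω → ℝ), Measurable c → (∀ ω, c ω = 0 ∨ c ω = 1) →
      Integrable (fun ω => c ω * uu P ξ D lam (T - n) (walk η y n ω)) P := by
    intro n c hc hc01
    apply integrable_of_bdd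
      (C := ((|y| + n + T : ℤ) : ℝ) + ∫ x : ℤ, |(x : ℝ)| ∂lam)
      ((hc.mul ((measurable_of_countable (uu P ξ D lam (T - n))).comp
        (hYm n))).aestronglyMeasurable)
    filter_upwards [good_ae h] with ω hg
    have hgy : ∀ i, η i ω = 1 ∨ η i ω = -1 := fun i => by simpa using hg (Sum.inr i)
    have hwb : |walk η y n ω| ≤ |y| + n := walk_bound hgy
    have hub := uu_bdd (D := D) h hlam (T - n) (walk η y n ω)
    have hcast : ((|walk η y n ω| + ((T - n : ℕ) : ℤ) : ℤ) : ℝ) ≤ ((|y| + n + T : ℤ) : ℝ) := by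
      apply Int.cast_le.mpr
      have h6 : ((T - n : ℕ) : ℤ) ≤ (T : ℤ) := by exact_mod_cast Nat.sub_le T n
      omega
    rw [Pi.mul_apply, Function.comp_apply, abs_mul]
    rcases hc01 ω with h0 | h1
    · rw [h0, abs_zero, zero_mul]
      have : (0:ℝ) ≤ ((|y| + n + T : ℤ) : ℝ) := by
        apply Int.cast_nonneg_iff.mpr
        positivity
      linarith
    · rw [h1, abs_one, one_mul]
      refine hub.trans ?_
      linarith
  -- telescoping induction
  have hQ : ∀ k, k ≤ T →
      (∑ m ∈ Finset.range k, ∫ ω, (if τ ω = m then (1:ℝ) else 0)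
        * uu P ξ D lam (T - m) (walk η y m ω) ∂P)
      + ∫ ω, (if k ≤ τ ω then (1:ℝ) else 0) * uu P ξ D lam (T - k) (walk η y k ω) ∂P
      ≤ uu P ξ D lam T y := by
    intro k
    induction k with
    | zero =>
      intro _
      simp only [Finset.range_zero, Finset.sum_empty, zero_add]
      have hc : ∀ ω, (if 0 ≤ τ ω then (1:ℝ) else 0) * uu P ξ D lam (T - 0) (walk η y 0 ω)
          = uu P ξ D lam T y := by
        intro ω
        rw [if_pos (Nat.zero_le _), walk_zero, one_mul, Nat.sub_zero]
      rw [integral_congr_ae (Filter.Eventually.of_forall hc), integral_const]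
      simp
    | succ k ih =>
      intro hk1
      have hkT : k < T := hk1
      have hih := ih (le_of_lt hkT)
      have hmeq : ∀ m : ℕ, Measurable (fun ω => if τ ω = m then (1:ℝ) else 0) := fun m =>
        (measurable_of_countable (fun j : ℕ => if j = m then (1:ℝ) else 0)).comp hτm
      have hmle : ∀ m : ℕ, Measurable (fun ω => if m ≤ τ ω then (1:ℝ) else 0) := fun m =>
        (measurable_of_countable (fun j : ℕ => if m ≤ j then (1:ℝ) else 0)).comp hτm
      have hdec : (fun ω => (if k ≤ τ ω then (1:ℝ) else 0)
            * uu P ξ D lam (T - k) (walk η y k ω))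
          = fun ω => (if τ ω = k then (1:ℝ) else 0) * uu P ξ D lam (T - k) (walk η y k ω)
            + (if k + 1 ≤ τ ω then (1:ℝ) else 0) * uu P ξ D lam (T - k) (walk η y k ω) := by
        funext ω
        by_cases h1 : τ ω = k
        · rw [if_pos (by omega), if_pos h1, if_neg (by omega)]; ring
        · by_cases h2 : k ≤ τ ω
          · rw [if_pos h2, if_neg h1, if_pos (by omega)]; ring
          · rw [if_neg h2, if_neg h1, if_neg (by omega)]; ring
      have hsplit : ∫ ω, (if k ≤ τ ω then (1:ℝ) else 0)
            * uu P ξ D lam (T - k) (walk η y k ω) ∂P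
          = (∫ ω, (if τ ω = k then (1:ℝ) else 0) * uu P ξ D lam (T - k) (walk η y k ω) ∂P)
            + ∫ ω, (if k + 1 ≤ τ ω then (1:ℝ) else 0)
              * uu P ξ D lam (T - k) (walk η y k ω) ∂P := by
        rw [show ∫ ω, (if k ≤ τ ω then (1:ℝ) else 0)
            * uu P ξ D lam (T - k) (walk η y k ω) ∂P
          = ∫ ω, ((if τ ω = k then (1:ℝ) else 0) * uu P ξ D lam (T - k) (walk η y k ω)
            + (if k + 1 ≤ τ ω then (1:ℝ) else 0) * uu P ξ D lam (T - k) (walk η y k ω)) ∂P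
          from by rw [← hdec]]
        exact integral_add
          (hindint k _ (hmeq k) fun ω => by by_cases hh : τ ω = k <;> simp [hh])
          (hindint k _ (hmle (k+1)) fun ω => by by_cases hh : k + 1 ≤ τ ω <;> simp [hh])
      have hstep := y_step (D := D) h hlam y τ hτ k T hkT
      calc (∑ m ∈ Finset.range (k+1), ∫ ω, (if τ ω = m then (1:ℝ) else 0)
            * uu P ξ D lam (T - m) (walk η y m ω) ∂P)
          + ∫ ω, (if k + 1 ≤ τ ω then (1:ℝ) else 0)
            * uu P ξ D lam (T - (k+1)) (walk η y (k+1) ω) ∂P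
          ≤ (∑ m ∈ Finset.range (k+1), ∫ ω, (if τ ω = m then (1:ℝ) else 0)
            * uu P ξ D lam (T - m) (walk η y m ω) ∂P)
          + ∫ ω, (if k + 1 ≤ τ ω then (1:ℝ) else 0)
            * uu P ξ D lam (T - k) (walk η y k ω) ∂P := by
            exact add_le_add (le_refl _) hstep
        _ = (∑ m ∈ Finset.range k, ∫ ω, (if τ ω = m then (1:ℝ) else 0)
            * uu P ξ D lam (T - m) (walk η y m ω) ∂P)
          + ∫ ω, (if k ≤ τ ω then (1:ℝ) else 0)
            * uu P ξ D lam (T - k) (walk η y k ω) ∂P := by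
            rw [Finset.sum_range_succ, hsplit]
            ring
        _ ≤ uu P ξ D lam T y := hih
  have hfinal1 := hQ T (le_refl T)
  have hbT : (fun ω => (if T ≤ τ ω then (1:ℝ) else 0)
        * uu P ξ D lam (T - T) (walk η y T ω))
      = fun ω => (if τ ω = T then (1:ℝ) else 0) * uu P ξ D lam (T - T) (walk η y T ω) := by
    funext ω
    have := hτT ω
    by_cases hle : τ ω = T
    · rw [if_pos (by omega), if_pos hle]
    · rw [if_neg (by omega), if_neg hle]
  rw [hbT] at hfinal1
  have hsum_all : (∑ m ∈ Finset.range (T+1), ∫ ω, (if τ ω = m then (1:ℝ) else 0)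
      * uu P ξ D lam (T - m) (walk η y m ω) ∂P) ≤ uu P ξ D lam T y := by
    rw [Finset.sum_range_succ]
    exact hfinal1
  -- swap sum and integral
  have hmeq : ∀ m : ℕ, Measurable (fun ω => if τ ω = m then (1:ℝ) else 0) := fun m =>
    (measurable_of_countable (fun j : ℕ => if j = m then (1:ℝ) else 0)).comp hτm
  have hswap : (∑ m ∈ Finset.range (T+1), ∫ ω, (if τ ω = m then (1:ℝ) else 0)
      * uu P ξ D lam (T - m) (walk η y m ω) ∂P)
      = ∫ ω, uu P ξ D lam (T - τ ω) (walk η y (τ ω) ω) ∂P := by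
    rw [← integral_finset_sum _ (fun m _ =>
      hindint m _ (hmeq m) fun ω => by by_cases hh : τ ω = m <;> simp [hh])]
    apply integral_congr_ae
    filter_upwards with ω
    rw [Finset.sum_eq_single_of_mem (τ ω) (Finset.mem_range.mpr (by have := hτT ω; omega))]
    · rw [if_pos rfl, one_mul]
    · intro m _ hne
      rw [if_neg (Ne.symm hne), zero_mul]
  -- measurability of the two composite integrands
  have hmapm : Measurable (fun ω => (τ ω, fun i : Fin (T+1) => walk η y i ω)) :=
    hτm.prodMk (measurable_pi_lambda _ fun i => hYm i)
  have hcomp : ∀ Φ : ℕ × (Fin (T+1) → ℤ) → ℝ,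
      Measurable fun ω => Φ (τ ω, fun i : Fin (T+1) => walk η y i ω) :=
    fun Φ => (measurable_of_countable Φ).comp hmapm
  have hUeq : (fun ω => uu P ξ D lam (T - τ ω) (walk η y (τ ω) ω))
      = fun ω => (fun q : ℕ × (Fin (T+1) → ℤ) =>
          uu P ξ D lam (T - q.1) (q.2 ⟨min q.1 T, by omega⟩))
        (τ ω, fun i : Fin (T+1) => walk η y i ω) := by
    funext ω
    have hmin : min (τ ω) T = τ ω := min_eq_left (hτT ω)
    show _ = uu P ξ D lam (T - τ ω) (walk η y (min (τ ω) T) ω)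
    rw [hmin]
  have hUm : Measurable (fun ω => uu P ξ D lam (T - τ ω) (walk η y (τ ω) ω)) := by
    rw [hUeq]
    exact hcomp fun q : ℕ × (Fin (T+1) → ℤ) =>
      uu P ξ D lam (T - q.1) (q.2 ⟨min q.1 T, by omega⟩)
  have hGeq : (fun ω => (if τ ω < T then potential (muRoot P ξ D lam) (walk η y (τ ω) ω) else 0)
        + (if τ ω = T then potential lam (walk η y (τ ω) ω) else 0))
      = fun ω => (fun q : ℕ × (Fin (T+1) → ℤ) =>
          (if q.1 < T then potential (muRoot P ξ D lam) (q.2 ⟨min q.1 T, by omega⟩) else 0)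
          + (if q.1 = T then potential lam (q.2 ⟨min q.1 T, by omega⟩) else 0))
        (τ ω, fun i : Fin (T+1) => walk η y i ω) := by
    funext ω
    have hmin : min (τ ω) T = τ ω := min_eq_left (hτT ω)
    show _ = (if τ ω < T then potential (muRoot P ξ D lam) (walk η y (min (τ ω) T) ω) else 0)
      + (if τ ω = T then potential lam (walk η y (min (τ ω) T) ω) else 0)
    rw [hmin]
  have hGm : Measurable (fun ω =>
      (if τ ω < T then potential (muRoot P ξ D lam) (walk η y (τ ω) ω) else 0)
      + (if τ ω = T then potential lam (walk η y (τ ω) ω) else 0)) := by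
    rw [hGeq]
    exact hcomp fun q : ℕ × (Fin (T+1) → ℤ) =>
      (if q.1 < T then potential (muRoot P ξ D lam) (q.2 ⟨min q.1 T, by omega⟩) else 0)
      + (if q.1 = T then potential lam (q.2 ⟨min q.1 T, by omega⟩) else 0)
  -- bounds
  have hYτb : ∀ᵐ ω ∂P, |walk η y (τ ω) ω| ≤ |y| + T := by
    filter_upwards [good_ae h] with ω hg
    have hgy : ∀ i, η i ω = 1 ∨ η i ω = -1 := fun i => by simpa using hg (Sum.inr i)
    have hwb : |walk η y (τ ω) ω| ≤ |y| + τ ω := walk_bound hgy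
    have := hτT ω
    omega
  have hUint : Integrable (fun ω => uu P ξ D lam (T - τ ω) (walk η y (τ ω) ω)) P := by
    apply integrable_of_bdd (C := ((|y| + T + T : ℤ) : ℝ) + ∫ x : ℤ, |(x : ℝ)| ∂lam)
      hUm.aestronglyMeasurable
    filter_upwards [hYτb] with ω hwb
    have hub := uu_bdd (D := D) h hlam (T - τ ω) (walk η y (τ ω) ω)
    have hcast : ((|walk η y (τ ω) ω| + ((T - τ ω : ℕ) : ℤ) : ℤ) : ℝ)
        ≤ ((|y| + T + T : ℤ) : ℝ) := by
      apply Int.cast_le.mpr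
      have h6 : ((T - τ ω : ℕ) : ℤ) ≤ (T : ℤ) := by exact_mod_cast Nat.sub_le T (τ ω)
      omega
    refine hub.trans ?_
    linarith
  have hGint : Integrable (fun ω =>
      (if τ ω < T then potential (muRoot P ξ D lam) (walk η y (τ ω) ω) else 0)
      + (if τ ω = T then potential lam (walk η y (τ ω) ω) else 0)) P := by
    apply integrable_of_bdd
      (C := (((|y| + T : ℤ) : ℝ) + ∫ p, |((hitWalk ξ D p : ℤ) : ℝ)| ∂(lam.prod P))
        + (((|y| + T : ℤ) : ℝ) + ∫ x : ℤ, |(x : ℝ)| ∂lam))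
      hGm.aestronglyMeasurable
    filter_upwards [hYτb] with ω hwb
    have hcast : ((|walk η y (τ ω) ω| : ℤ) : ℝ) ≤ ((|y| + T : ℤ) : ℝ) :=
      Int.cast_le.mpr (by omega)
    have hb1 : |(if τ ω < T then potential (muRoot P ξ D lam) (walk η y (τ ω) ω) else 0)|
        ≤ ((|y| + T : ℤ) : ℝ) + ∫ p, |((hitWalk ξ D p : ℤ) : ℝ)| ∂(lam.prod P) := by
      by_cases hc : τ ω < T
      · rw [if_pos hc]
        refine (potential_muRoot_bdd h hintg _).trans ?_
        linarith
      · rw [if_neg hc, abs_zero]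
        have : (0:ℝ) ≤ ((|y| + T : ℤ) : ℝ) := Int.cast_nonneg_iff.mpr (by positivity)
        linarith
    have hb2 : |(if τ ω = T then potential lam (walk η y (τ ω) ω) else 0)|
        ≤ ((|y| + T : ℤ) : ℝ) + ∫ x : ℤ, |(x : ℝ)| ∂lam := by
      by_cases hc : τ ω = T
      · rw [if_pos hc]
        refine (potential_lam_bdd hlam _).trans ?_
        linarith
      · rw [if_neg hc, abs_zero]
        have : (0:ℝ) ≤ ((|y| + T : ℤ) : ℝ) := Int.cast_nonneg_iff.mpr (by positivity)
        linarith
    calc |(if τ ω < T then potential (muRoot P ξ D lam) (walk η y (τ ω) ω) else 0)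
          + (if τ ω = T then potential lam (walk η y (τ ω) ω) else 0)|
        ≤ |(if τ ω < T then potential (muRoot P ξ D lam) (walk η y (τ ω) ω) else 0)|
          + |(if τ ω = T then potential lam (walk η y (τ ω) ω) else 0)| := abs_add_le _ _
      _ ≤ _ := add_le_add hb1 hb2
  -- pointwise comparison
  have hptw : ∀ᵐ ω ∂P, (if τ ω < T then potential (muRoot P ξ D lam) (walk η y (τ ω) ω) else 0)
      + (if τ ω = T then potential lam (walk η y (τ ω) ω) else 0)
      ≤ uu P ξ D lam (T - τ ω) (walk η y (τ ω) ω) := by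
    filter_upwards with ω
    by_cases hc : τ ω = T
    · rw [if_neg (by omega), if_pos hc, zero_add, hc, Nat.sub_self,
        uu_zero (D := D) h hlam]
    · have hlt : τ ω < T := by have := hτT ω; omega
      rw [if_pos hlt, if_neg hc, add_zero]
      exact uu_ge_muRoot h hlam hfin hUI (T - τ ω) (walk η y (τ ω) ω)
  rw [ge_iff_le, potential_muRootT h hlam T y]
  calc ∫ ω, ((if τ ω < T then potential (muRoot P ξ D lam) (walk η y (τ ω) ω) else 0)
        + (if τ ω = T then potential lam (walk η y (τ ω) ω) else 0)) ∂P
      ≤ ∫ ω, uu P ξ D lam (T - τ ω) (walk η y (τ ω) ω) ∂P :=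
        integral_mono_ae hGint hUint hptw
    _ = ∑ m ∈ Finset.range (T+1), ∫ ω, (if τ ω = m then (1:ℝ) else 0)
        * uu P ξ D lam (T - m) (walk η y m ω) ∂P := hswap.symm
    _ ≤ uu P ξ D lam T y := hsum_all

end SwitchingIdentities
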